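/- arXiv:1912.00539 — 9 statements merged into one kernel-verified Lean document; each statement's English description precedes it below -/
import Mathlib

section
/- Suppose there exist a vector v ∈ ℝⁿ with v > 0 and a scalar α < 1 such that |B| v ≤ α v componentwise. Then the matrix I − B is invertible, and every chaotic relaxation (x^j) for (B, c) (for any initial vector x⁰, any admissible shift functions and any admissible update function) converges: x^j → x* as j → ∞, where x* is the unique solution of x = B x + c. -/
open Filter Topology

/-- A chaotic relaxation for the pair `(B, c)`: a sequence `x` of vectors together with
shift functions `s` and an update function `u` satisfying the Chazan–Miranker conditions. -/
def IsChaoticRelaxation {n : ℕ} (B : Matrix (Fin n) (Fin n) ℝ) (c : Fin n → ℝ)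
    (x : ℕ → Fin n → ℝ) (s : Fin n → ℕ → ℕ) (u : ℕ → Fin n) : Prop :=
  (∀ j : ℕ, 1 ≤ j → ∀ i : Fin n,
      (i ≠ u j → x (j + 1) i = x j i) ∧
      (i = u j → x (j + 1) i = (∑ α : Fin n, B i α * x (j - s α j) α) + c i)) ∧
  (∃ shat : ℕ, ∀ (α : Fin n) (j : ℕ), 1 ≤ j → s α j ≤ min (j - 1) shat) ∧
  (∀ (i : Fin n) (j : ℕ), 1 ≤ j → ∃ l : ℕ, j < l ∧ u l = i)

/-- If there are `v > 0` (componentwise) and `α < 1` with `|B| v ≤ α v` componentwise,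
then `I - B` is invertible and every chaotic relaxation for `(B, c)` converges to the
unique solution of `x = B x + c`. -/
theorem chaotic_relaxation_converges_of_abs_contraction
    {n : ℕ} (hn : 1 ≤ n) (B : Matrix (Fin n) (Fin n) ℝ) (c : Fin n → ℝ)
    (v : Fin n → ℝ) (a : ℝ) (hv : ∀ i, 0 < v i) (ha : a < 1)
    (hBv : ∀ i, (∑ j : Fin n, |B i j| * v j) ≤ a * v i) :
    IsUnit ((1 : Matrix (Fin n) (Fin n) ℝ) - B) ∧
    ∀ xs : Fin n → ℝ, xs = B.mulVec xs + c →
      ∀ (x : ℕ → Fin n → ℝ) (s : Fin n → ℕ → ℕ) (u : ℕ → Fin n),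
        IsChaoticRelaxation B c x s u →
        Tendsto x atTop (𝓝 xs) := by
  haveI hne : Nonempty (Fin n) := Fin.pos_iff_nonempty.mp hn
  have ha0 : 0 ≤ a := by
    obtain ⟨i⟩ := hne
    have h1 : (0:ℝ) ≤ ∑ j : Fin n, |B i j| * v j :=
      Finset.sum_nonneg fun j _ => mul_nonneg (abs_nonneg _) (hv j).le
    nlinarith [hBv i, hv i]
  -- key contraction estimate
  have key : ∀ (K : ℝ), 0 ≤ K → ∀ (y z : Fin n → ℝ),
      (∀ α, |y α - z α| ≤ K * v α) →
      ∀ i, |(∑ α : Fin n, B i α * y α) - ∑ α : Fin n, B i α * z α| ≤ a * K * v i := by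
    intro K hK y z hy i
    have hEq : (∑ α : Fin n, B i α * y α) - ∑ α : Fin n, B i α * z α
        = ∑ α : Fin n, B i α * (y α - z α) := by
      rw [← Finset.sum_sub_distrib]
      exact Finset.sum_congr rfl fun α _ => by ring
    rw [hEq]
    calc |∑ α : Fin n, B i α * (y α - z α)|
        ≤ ∑ α : Fin n, |B i α * (y α - z α)| := Finset.abs_sum_le_sum_abs _ _
      _ ≤ ∑ α : Fin n, |B i α| * (K * v α) := by
          apply Finset.sum_le_sum; intro α _
          rw [abs_mul]
          exact mul_le_mul_of_nonneg_left (hy α) (abs_nonneg _)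
      _ = K * ∑ α : Fin n, |B i α| * v α := by
          rw [Finset.mul_sum]
          exact Finset.sum_congr rfl fun α _ => by ring
      _ ≤ K * (a * v i) := mul_le_mul_of_nonneg_left (hBv i) hK
      _ = a * K * v i := by ring
  constructor
  · -- invertibility of 1 - B
    rw [Matrix.isUnit_iff_isUnit_det, isUnit_iff_ne_zero]
    intro hdet
    obtain ⟨y, hy0, hy⟩ := (Matrix.exists_mulVec_eq_zero_iff).mpr hdet
    have hyB : ∀ i, y i = ∑ α : Fin n, B i α * y α := by
      intro i
      rw [Matrix.sub_mulVec, Matrix.one_mulVec, sub_eq_zero] at hy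
      have h := congrFun hy i
      simpa [Matrix.mulVec, dotProduct] using h
    set K : ℝ := Finset.univ.sup' Finset.univ_nonempty (fun i => |y i| / v i) with hKdef
    have hKle : ∀ i, |y i| ≤ K * v i := by
      intro i
      have h := Finset.le_sup' (fun i => |y i| / v i) (Finset.mem_univ i)
      rw [div_le_iff₀ (hv i)] at h
      simpa [hKdef] using h
    have hK0 : 0 ≤ K := by
      obtain ⟨i⟩ := hne
      have : (0:ℝ) ≤ |y i| / v i := div_nonneg (abs_nonneg _) (hv i).le
      exact this.trans (Finset.le_sup' (fun i => |y i| / v i) (Finset.mem_univ i))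
    have hcontr : ∀ i, |y i| ≤ a * K * v i := by
      intro i
      have h := key K hK0 y (fun _ => 0) (by simpa using hKle) i
      simpa [hyB i] using h
    obtain ⟨i, _, hi⟩ := Finset.exists_mem_eq_sup' Finset.univ_nonempty (fun i => |y i| / v i)
    have hKi : K * v i = |y i| := by
      rw [hKdef, hi]
      exact div_mul_cancel₀ _ (hv i).ne'
    have hKa : K ≤ a * K := by
      have h := hcontr i
      rw [← hKi] at h
      nlinarith [hv i]
    have hK0' : K = 0 := by nlinarith
    apply hy0
    funext i
    have hle := hKle i
    rw [hK0', zero_mul] at hle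
    have h0 : y i = 0 := abs_eq_zero.mp (le_antisymm hle (abs_nonneg _))
    simpa using h0
  · -- convergence
    intro xs hxs x s u hrel
    obtain ⟨hrec, ⟨shat, hs⟩, hu⟩ := hrel
    have hxs' : ∀ i, xs i = (∑ α : Fin n, B i α * xs α) + c i := by
      intro i
      have h := congrFun hxs i
      simpa [Matrix.mulVec, dotProduct] using h
    have core : ∀ (K : ℝ), 0 ≤ K → ∀ (y : Fin n → ℝ),
        (∀ α, |y α - xs α| ≤ K * v α) →
        ∀ i, |((∑ α : Fin n, B i α * y α) + c i) - xs i| ≤ a * K * v i := by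
      intro K hK y hy i
      have h := key K hK y xs hy i
      have hEq : ((∑ α : Fin n, B i α * y α) + c i) - xs i
          = (∑ α : Fin n, B i α * y α) - ∑ α : Fin n, B i α * xs α := by
        rw [hxs' i]; ring
      rw [hEq]; exact h
    set K₀ : ℝ := Finset.univ.sup' Finset.univ_nonempty (fun i => |x 1 i - xs i| / v i)
      with hK₀def
    have hK₀0 : 0 ≤ K₀ := by
      obtain ⟨i⟩ := hne
      have : (0:ℝ) ≤ |x 1 i - xs i| / v i := div_nonneg (abs_nonneg _) (hv i).le
      exact this.trans (Finset.le_sup' (fun i => |x 1 i - xs i| / v i) (Finset.mem_univ i))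
    have hP1 : ∀ i, |x 1 i - xs i| ≤ K₀ * v i := by
      intro i
      have h := Finset.le_sup' (fun i => |x 1 i - xs i| / v i) (Finset.mem_univ i)
      rw [div_le_iff₀ (hv i)] at h
      simpa [hK₀def] using h
    -- global bound
    have claim1 : ∀ j k : ℕ, 1 ≤ k → k ≤ j → ∀ i, |x k i - xs i| ≤ K₀ * v i := by
      intro j
      induction j with
      | zero => intro k h1 h2; omega
      | succ j ih =>
        intro k h1 h2
        rcases Nat.lt_or_ge k (j + 1) with h | h
        · exact ih k h1 (by omega)
        · have hk : k = j + 1 := by omega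
          subst hk
          by_cases hj : 1 ≤ j
          · intro i
            rcases eq_or_ne i (u j) with he | he
            · rw [(hrec j hj i).2 he]
              refine le_trans (core K₀ hK₀0 _ (fun α => ?_) i) ?_
              · have hsb := hs α j hj
                exact ih (j - s α j) (by omega) (by omega) α
              · nlinarith [mul_nonneg (sub_nonneg.mpr ha.le) (mul_nonneg hK₀0 (hv i).le)]
            · rw [(hrec j hj i).1 he]
              exact ih j (by omega) le_rfl i
          · have hj0 : j = 0 := by omega
            subst hj0
            exact hP1
    -- contraction over rounds
    have claim2 : ∀ (K : ℝ), 0 ≤ K → ∀ T : ℕ, 1 ≤ T →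
        (∀ j, T ≤ j → ∀ i, |x j i - xs i| ≤ K * v i) →
        ∃ T' : ℕ, 1 ≤ T' ∧ ∀ j, T' ≤ j → ∀ i, |x j i - xs i| ≤ a * K * v i := by
      intro K hK T hT hPT
      choose l hl hlu using fun i => hu i (T + shat) (by omega)
      have comp : ∀ i, ∀ j, l i + 1 ≤ j → |x j i - xs i| ≤ a * K * v i := by
        intro i j
        induction j with
        | zero => intro h; omega
        | succ j ih =>
          intro hj
          rcases Nat.lt_or_ge j (l i + 1) with h | h
          · -- j = l i : update step
            have hjl : j = l i := by omega
            have hj1 : 1 ≤ j := by have := hl i; omega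
            have hui : i = u j := by rw [hjl]; exact (hlu i).symm
            rw [(hrec j hj1 i).2 hui]
            apply core K hK
            intro α
            have hsb := hs α j hj1
            have hli := hl i
            exact hPT (j - s α j) (by omega) α
          · rcases eq_or_ne i (u j) with he | he
            · have hj1 : 1 ≤ j := by have := hl i; omega
              rw [(hrec j hj1 i).2 he]
              apply core K hK
              intro α
              have hsb := hs α j hj1
              have hli := hl i
              exact hPT (j - s α j) (by omega) α
            · have hj1 : 1 ≤ j := by have := hl i; omega
              rw [(hrec j hj1 i).1 he]
              exact ih h
      refine ⟨(Finset.univ.sup l) + 1, by omega, ?_⟩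
      intro j hj i
      have hle : l i ≤ Finset.univ.sup l := Finset.le_sup (Finset.mem_univ i)
      exact comp i j (by omega)
    -- iterate
    have iter : ∀ k : ℕ, ∃ T : ℕ, 1 ≤ T ∧
        ∀ j, T ≤ j → ∀ i, |x j i - xs i| ≤ a ^ k * K₀ * v i := by
      intro k
      induction k with
      | zero =>
        refine ⟨1, le_rfl, ?_⟩
        intro j hj i
        simpa using claim1 j j hj le_rfl i
      | succ k ih =>
        obtain ⟨T, hT1, hTP⟩ := ih
        obtain ⟨T', h1, h2⟩ := claim2 (a ^ k * K₀)
          (mul_nonneg (pow_nonneg ha0 k) hK₀0) T hT1 hTP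
        refine ⟨T', h1, ?_⟩
        intro j hj i
        have h := h2 j hj i
        have hEq : a ^ (k + 1) * K₀ * v i = a * (a ^ k * K₀) * v i := by ring
        rw [hEq]; exact h
    -- conclude
    rw [tendsto_pi_nhds]
    intro i
    rw [Metric.tendsto_atTop]
    intro ε hε
    have hlim : Tendsto (fun k : ℕ => a ^ k * (K₀ * v i)) atTop (𝓝 0) := by
      have := (tendsto_pow_atTop_nhds_zero_of_lt_one ha0 ha).mul_const (K₀ * v i)
      simpa using this
    obtain ⟨k, hk⟩ := (Metric.tendsto_atTop.mp hlim ε hε)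
    have hk' : a ^ k * (K₀ * v i) < ε := by
      have h := hk k le_rfl
      rw [Real.dist_eq] at h
      have : |a ^ k * (K₀ * v i) - 0| = a ^ k * (K₀ * v i) := by
        rw [sub_zero, abs_of_nonneg]
        exact mul_nonneg (pow_nonneg ha0 k) (mul_nonneg hK₀0 (hv i).le)
      rwa [this] at h
    obtain ⟨T, hT1, hTP⟩ := iter k
    refine ⟨T, fun j hj => ?_⟩
    rw [Real.dist_eq]
    have h := hTP j hj i
    calc |x j i - xs i| ≤ a ^ k * K₀ * v i := h
      _ = a ^ k * (K₀ * v i) := by ring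
      _ < ε := hk'
end

section
/- If the spectral radius of |B| (the maximum modulus of the complex eigenvalues of the entrywise absolute-value matrix |B|) is strictly less than 1, then there exist a vector v ∈ ℝⁿ with v > 0 and a scalar α < 1 such that |B| v ≤ α v componentwise; consequently every chaotic relaxation for (B, c) converges to the unique solution of x = B x + c. -/
open Filter Topology
open scoped ENNReal NNReal

/-- summing a componentwise bound through the matrix. -/
private lemma cm_sum_bound {n : ℕ} (B : Matrix (Fin n) (Fin n) ℝ) (v : Fin n → ℝ) (a : ℝ)
    (hBv : ∀ i, (∑ j : Fin n, |B i j| * v j) ≤ a * v i)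
    {K : ℝ} (hK : 0 ≤ K) (e : Fin n → ℝ) (he : ∀ α, |e α| ≤ K * v α) (i : Fin n) :
    |∑ α : Fin n, B i α * e α| ≤ a * K * v i := by
  calc |∑ α : Fin n, B i α * e α| ≤ ∑ α : Fin n, |B i α * e α| :=
        Finset.abs_sum_le_sum_abs _ _
    _ = ∑ α : Fin n, |B i α| * |e α| := by simp [abs_mul]
    _ ≤ ∑ α : Fin n, |B i α| * (K * v α) := by
        exact Finset.sum_le_sum fun α _ => mul_le_mul_of_nonneg_left (he α) (abs_nonneg _)
    _ = K * ∑ α : Fin n, |B i α| * v α := by rw [Finset.mul_sum]; apply Finset.sum_congr rfl; intros; ring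
    _ ≤ K * (a * v i) := mul_le_mul_of_nonneg_left (hBv i) hK
    _ = a * K * v i := by ring

/-- uniqueness part: a vector fixed by `B` must be zero. -/
private lemma cm_fixed_zero {n : ℕ} (hn : 1 ≤ n) (B : Matrix (Fin n) (Fin n) ℝ)
    (v : Fin n → ℝ) (a : ℝ) (hv : ∀ i, 0 < v i) (ha1 : a < 1)
    (hBv : ∀ i, (∑ j : Fin n, |B i j| * v j) ≤ a * v i)
    (d : Fin n → ℝ) (hd : d = B.mulVec d) : d = 0 := by
  have hne : (Finset.univ : Finset (Fin n)).Nonempty := by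
    simpa [Finset.univ_nonempty_iff] using Fin.pos_iff_nonempty.mp hn
  obtain ⟨i0, -, hmax⟩ := Finset.exists_max_image Finset.univ (fun i => |d i| / v i) hne
  set t : ℝ := |d i0| / v i0 with ht
  have ht0 : 0 ≤ t := div_nonneg (abs_nonneg _) (hv i0).le
  have hle : ∀ i, |d i| ≤ t * v i := fun i => by
    have := hmax i (Finset.mem_univ i)
    exact (div_le_iff₀ (hv i)).mp this
  have hdi0 : |d i0| ≤ a * t * v i0 := by
    have : d i0 = ∑ α : Fin n, B i0 α * d α := by
      conv_lhs => rw [hd]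
      simp [Matrix.mulVec, dotProduct]
    rw [this]
    exact cm_sum_bound B v a hBv ht0 d hle i0
  have hti : |d i0| = t * v i0 := by
    rw [ht, div_mul_cancel₀ _ (hv i0).ne']
  have htv : 0 ≤ t := ht0
  have ht_zero : t = 0 := by
    rcases eq_or_lt_of_le ht0 with h|h
    · exact h.symm
    · nlinarith [hdi0, hti, mul_pos h (hv i0)]
  funext i
  have := hle i
  rw [ht_zero] at this
  simp only [zero_mul] at this
  have : |d i| = 0 := le_antisymm this (abs_nonneg _)
  simpa [abs_eq_zero] using this

private lemma cm_converges {n : ℕ} (hn : 1 ≤ n) (B : Matrix (Fin n) (Fin n) ℝ) (c : Fin n → ℝ)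
    (v : Fin n → ℝ) (a : ℝ) (hv : ∀ i, 0 < v i) (ha0 : 0 ≤ a) (ha1 : a < 1)
    (hBv : ∀ i, (∑ j : Fin n, |B i j| * v j) ≤ a * v i)
    (xs : Fin n → ℝ) (hxs : xs = B.mulVec xs + c)
    (x : ℕ → Fin n → ℝ) (s : Fin n → ℕ → ℕ) (u : ℕ → Fin n)
    (hrel : IsChaoticRelaxation B c x s u) :
    Tendsto x atTop (𝓝 xs) := by
  haveI : Nonempty (Fin n) := Fin.pos_iff_nonempty.mp hn
  obtain ⟨hupd, ⟨shat, hs⟩, hfair⟩ := hrel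
  set e : ℕ → Fin n → ℝ := fun j i => x j i - xs i with he
  have hxs' : ∀ i, xs i = (∑ α : Fin n, B i α * xs α) + c i := by
    intro i
    conv_lhs => rw [hxs]
    simp [Matrix.mulVec, dotProduct]
  -- recurrence for updated components
  have he2 : ∀ j, 1 ≤ j → ∀ i, i = u j →
      e (j + 1) i = ∑ α : Fin n, B i α * e (j - s α j) α := by
    intro j hj i hi
    have h1 := (hupd j hj i).2 hi
    simp only [he]
    rw [h1]
    conv_lhs => rw [hxs' i]
    simp only [mul_sub, Finset.sum_sub_distrib]
    ring
  have he1 : ∀ j, 1 ≤ j → ∀ i, i ≠ u j → e (j + 1) i = e j i := by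
    intro j hj i hi
    simp only [he]
    rw [(hupd j hj i).1 hi]
  -- the uniform bound C
  have hIccne : (Finset.Icc 1 (shat + 1)).Nonempty := ⟨1, by simp⟩
  set C : ℝ := (Finset.Icc 1 (shat + 1)).sup' hIccne
      (fun k => Finset.univ.sup' Finset.univ_nonempty (fun i => |e k i| / v i)) with hCdef
  have hCk : ∀ k, 1 ≤ k → k ≤ shat + 1 → ∀ i, |e k i| ≤ C * v i := by
    intro k hk1 hk2 i
    have h1 : |e k i| / v i ≤ C := by
      refine le_trans (Finset.le_sup' (fun i => |e k i| / v i) (Finset.mem_univ i)) ?_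
      exact Finset.le_sup' (fun k => Finset.univ.sup' Finset.univ_nonempty (fun i => |e k i| / v i)) (Finset.mem_Icc.mpr ⟨hk1, hk2⟩)
    calc |e k i| = (|e k i| / v i) * v i := by field_simp [(hv i).ne']
      _ ≤ C * v i := mul_le_mul_of_nonneg_right h1 (hv i).le
  have hC0 : 0 ≤ C := by
    have := hCk 1 le_rfl (by omega) (Classical.arbitrary (Fin n))
    nlinarith [abs_nonneg (e 1 (Classical.arbitrary (Fin n))), hv (Classical.arbitrary (Fin n))]
  -- claim 1 : global bound
  have claim1 : ∀ j, 1 ≤ j → ∀ i, |e j i| ≤ C * v i := by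
    intro j
    induction j using Nat.strong_induction_on with
    | _ j IH =>
      intro hj i
      by_cases hsmall : j ≤ shat + 1
      · exact hCk j hj hsmall i
      · push_neg at hsmall
        obtain ⟨m, rfl⟩ : ∃ m, j = m + 1 := ⟨j - 1, by omega⟩
        have hm1 : 1 ≤ m := by omega
        by_cases hi : i = u m
        · rw [he2 m hm1 i hi]
          have hb : ∀ α, |e (m - s α m) α| ≤ C * v α := by
            intro α
            have hsa := hs α m hm1
            exact IH (m - s α m) (by omega) (by omega) α
          have := cm_sum_bound B v a hBv hC0 (fun α => e (m - s α m) α) hb i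
          calc |∑ α : Fin n, B i α * e (m - s α m) α| ≤ a * C * v i := this
            _ ≤ 1 * C * v i := by
                apply mul_le_mul_of_nonneg_right _ (hv i).le
                exact mul_le_mul_of_nonneg_right ha1.le hC0
            _ = C * v i := by ring
        · rw [he1 m hm1 i hi]
          exact IH m (by omega) hm1 i
  -- claim 2 : geometric decay
  have claim2 : ∀ m : ℕ, ∃ J, 1 ≤ J ∧ ∀ j, J ≤ j → ∀ i, |e j i| ≤ a ^ m * C * v i := by
    intro m
    induction m with
    | zero => exact ⟨1, le_rfl, fun j hj i => by simpa using claim1 j hj i⟩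
    | succ m ih =>
      obtain ⟨J, hJ1, hJ⟩ := ih
      choose L hL1 hL2 using fun i => hfair i (J + shat) (by omega)
      set J' : ℕ := (Finset.univ.sup L) + 1 with hJ'def
      refine ⟨J', by omega, ?_⟩
      have hKnn : 0 ≤ a ^ m * C := mul_nonneg (pow_nonneg ha0 m) hC0
      -- per-component bound from (L i)+1 onwards
      have percomp : ∀ i, ∀ j, L i + 1 ≤ j → |e j i| ≤ a ^ (m + 1) * C * v i := by
        intro i j hij
        induction j, hij using Nat.le_induction with
        | base =>
          have hLi1 : 1 ≤ L i := by have := hL1 i; omega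
          rw [he2 (L i) hLi1 i (hL2 i).symm]
          have hb : ∀ α, |e (L i - s α (L i)) α| ≤ (a ^ m * C) * v α := by
            intro α
            have hsa := hs α (L i) hLi1
            have hLi := hL1 i
            exact hJ (L i - s α (L i)) (by omega) α
          have := cm_sum_bound B v a hBv hKnn (fun α => e (L i - s α (L i)) α) hb i
          calc |∑ α : Fin n, B i α * e (L i - s α (L i)) α|
              ≤ a * (a ^ m * C) * v i := this
            _ = a ^ (m + 1) * C * v i := by ring
        | succ j hij IH2 =>
          have hj1 : 1 ≤ j := by omega
          by_cases hi : i = u j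
          · rw [he2 j hj1 i hi]
            have hb : ∀ α, |e (j - s α j) α| ≤ (a ^ m * C) * v α := by
              intro α
              have hsa := hs α j hj1
              have hLi := hL1 i
              exact hJ (j - s α j) (by omega) α
            have := cm_sum_bound B v a hBv hKnn (fun α => e (j - s α j) α) hb i
            calc |∑ α : Fin n, B i α * e (j - s α j) α|
                ≤ a * (a ^ m * C) * v i := this
              _ = a ^ (m + 1) * C * v i := by ring
          · rw [he1 j hj1 i hi]; exact IH2
      intro j hj i
      refine percomp i j ?_
      have : L i ≤ Finset.univ.sup L := Finset.le_sup (Finset.mem_univ i)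
      omega
  -- conclude convergence
  rw [tendsto_pi_nhds]
  intro i
  rw [Metric.tendsto_atTop]
  intro ε hε
  have htend : Tendsto (fun m : ℕ => a ^ m * C * v i) atTop (𝓝 0) := by
    have h1 : Tendsto (fun m : ℕ => a ^ m) atTop (𝓝 0) :=
      tendsto_pow_atTop_nhds_zero_of_lt_one ha0 ha1
    have := (h1.mul_const C).mul_const (v i)
    simpa using this
  obtain ⟨m, hm⟩ := (htend.eventually (gt_mem_nhds hε)).exists
  obtain ⟨J, hJ1, hJ⟩ := claim2 m
  refine ⟨J, fun j hj => ?_⟩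
  have := hJ j hj i
  rw [Real.dist_eq]
  calc |x j i - xs i| = |e j i| := rfl
    _ ≤ a ^ m * C * v i := this
    _ < ε := hm

section SpectralPart

attribute [local instance] Matrix.linftyOpNormedAddCommGroup Matrix.linftyOpNormedRing
  Matrix.linftyOpNormedAlgebra

private lemma cm_exists_v {n : ℕ} (hn : 1 ≤ n) (B : Matrix (Fin n) (Fin n) ℝ)
    (hspec : ∀ μ : ℂ,
      (∃ w : Fin n → ℂ, w ≠ 0 ∧
        (B.map (fun t : ℝ => ((|t| : ℝ) : ℂ))).mulVec w = μ • w) →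
      ‖μ‖ < 1) :
    ∃ (v : Fin n → ℝ) (a : ℝ), (∀ i, 0 < v i) ∧ 0 ≤ a ∧ a < 1 ∧
      ∀ i, (∑ j : Fin n, |B i j| * v j) ≤ a * v i := by
  haveI : Nonempty (Fin n) := Fin.pos_iff_nonempty.mp hn
  set A : Matrix (Fin n) (Fin n) ℝ := B.map (fun t => |t|) with hA
  set M : Matrix (Fin n) (Fin n) ℂ := A.map Complex.ofReal with hM
  have hMeq : M = B.map (fun t : ℝ => ((|t| : ℝ) : ℂ)) := by
    rw [hM, hA, Matrix.map_map]
    rfl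
  -- every point of the spectrum has norm < 1
  have hMspec : ∀ z ∈ spectrum ℂ M, ‖z‖₊ < 1 := by
    intro z hz
    rw [spectrum.mem_iff] at hz
    have hdet : (algebraMap ℂ (Matrix (Fin n) (Fin n) ℂ) z - M).det = 0 := by
      by_contra h
      exact hz ((Matrix.isUnit_iff_isUnit_det _).mpr (isUnit_iff_ne_zero.mpr h))
    obtain ⟨w, hw0, hw⟩ := (Matrix.exists_mulVec_eq_zero_iff).mpr hdet
    have hMw : M.mulVec w = z • w := by
      have h1 : (algebraMap ℂ (Matrix (Fin n) (Fin n) ℂ) z) =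
          z • (1 : Matrix (Fin n) (Fin n) ℂ) := Algebra.algebraMap_eq_smul_one z
      rw [h1, Matrix.sub_mulVec, Matrix.smul_mulVec, Matrix.one_mulVec] at hw
      exact (sub_eq_zero.mp hw).symm
    have habs : ‖z‖ < 1 := hspec z ⟨w, hw0, by rw [← hMeq]; exact hMw⟩
    have : ‖z‖ < 1 := habs
    exact_mod_cast this
  have hrad : spectralRadius ℂ M < 1 := by
    have := spectrum.spectralRadius_lt_of_forall_lt M (r := 1) hMspec
    simpa using this
  obtain ⟨r, hr1, hr2⟩ := ENNReal.lt_iff_exists_nnreal_btwn.mp hrad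
  have hr2' : r < 1 := by exact_mod_cast hr2
  -- eventual geometric bound on powers, via Gelfand's formula
  have hgel := spectrum.pow_nnnorm_pow_one_div_tendsto_nhds_spectralRadius M
  have hev : ∀ᶠ k : ℕ in atTop, ‖M ^ k‖₊ ≤ r ^ k := by
    have h1 : ∀ᶠ k : ℕ in atTop, (‖M ^ k‖₊ : ℝ≥0∞) ^ (1 / (k : ℝ)) < r :=
      hgel.eventually_lt_const hr1
    filter_upwards [h1, eventually_ge_atTop 1] with k hk hk1
    have hk0 : (k : ℝ) ≠ 0 := Nat.cast_ne_zero.mpr (by omega)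
    have h2 : ((‖M ^ k‖₊ : ℝ≥0∞) ^ (1 / (k : ℝ))) ^ (k : ℝ) ≤ (r : ℝ≥0∞) ^ (k : ℝ) :=
      ENNReal.rpow_le_rpow hk.le (by positivity)
    rw [← ENNReal.rpow_mul, one_div, inv_mul_cancel₀ hk0, ENNReal.rpow_one,
      ENNReal.rpow_natCast, ← ENNReal.coe_pow] at h2
    exact_mod_cast h2
  -- norms of real and complex powers agree
  have hAMk : ∀ k : ℕ, ‖A ^ k‖₊ = ‖M ^ k‖₊ := by
    intro k
    have hMk : M ^ k = (A ^ k).map Complex.ofReal := by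
      have h := map_pow (Complex.ofRealHom.mapMatrix : Matrix (Fin n) (Fin n) ℝ →+* Matrix (Fin n) (Fin n) ℂ) A k
      simp only [RingHom.mapMatrix_apply] at h
      rw [hM]
      exact h.symm
    rw [hMk, Matrix.linfty_opNNNorm_def, Matrix.linfty_opNNNorm_def]
    congr 1
    funext i
    apply Finset.sum_congr rfl
    intro j _
    simp [Matrix.map_apply]
  -- the auxiliary sequence of row sums of powers
  set wseq : ℕ → Fin n → ℝ := fun k => (A ^ k).mulVec 1 with hwdef
  have hApos : ∀ (k : ℕ) i j, 0 ≤ (A ^ k) i j := by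
    intro k
    induction k with
    | zero => intro i j; rw [pow_zero]; by_cases h : i = j <;> simp [Matrix.one_apply, h]
    | succ k ih =>
      intro i j
      rw [pow_succ, Matrix.mul_apply]
      apply Finset.sum_nonneg
      intro l _
      exact mul_nonneg (ih i l) (abs_nonneg _)
  have hwa : ∀ k i, wseq k i = ∑ j, (A ^ k) i j := by
    intro k i
    rw [hwdef]
    simp [Matrix.mulVec, dotProduct]
  have hwnn : ∀ k i, 0 ≤ wseq k i := by
    intro k i
    rw [hwa]
    exact Finset.sum_nonneg fun j _ => hApos k i j
  have hw0 : ∀ i, wseq 0 i = 1 := by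
    intro i
    rw [hwdef]
    simp [Matrix.one_mulVec]
  have hwsucc : ∀ k i, wseq (k + 1) i = ∑ j, A i j * wseq k j := by
    intro k i
    have hps : A ^ (k + 1) = A * A ^ k := by rw [pow_succ']
    rw [hwdef]
    simp only [hps, ← Matrix.mulVec_mulVec]
    simp [Matrix.mulVec, dotProduct]
  have hsumm : ∀ i, Summable (fun k => wseq k i) := by
    intro i
    apply Summable.of_norm_bounded_eventually_nat
      (summable_geometric_of_lt_one r.coe_nonneg hr2')
    filter_upwards [hev] with k hk
    have h1 : |wseq k i| ≤ ‖wseq k‖ := by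
      simpa using norm_le_pi_norm (wseq k) i
    have h2 : ‖wseq k‖ ≤ ‖A ^ k‖ * ‖(1 : Fin n → ℝ)‖ := Matrix.linfty_opNorm_mulVec _ _
    have h3 : ‖(1 : Fin n → ℝ)‖ = 1 := by
      have : (1 : Fin n → ℝ) = fun _ => (1 : ℝ) := rfl
      rw [this, pi_norm_const, norm_one]
    have h4 : ‖A ^ k‖ ≤ (r : ℝ) ^ k := by
      have h5 : ‖A ^ k‖₊ ≤ r ^ k := hAMk k ▸ hk
      exact_mod_cast h5
    calc ‖wseq k i‖ = |wseq k i| := rfl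
      _ ≤ ‖wseq k‖ := h1
      _ ≤ ‖A ^ k‖ * 1 := by rw [← h3]; exact h2
      _ = ‖A ^ k‖ := by ring
      _ ≤ (r : ℝ) ^ k := h4
  set v : Fin n → ℝ := fun i => ∑' k, wseq k i with hvdef
  have hv1 : ∀ i, 1 ≤ v i := by
    intro i
    have := Summable.le_tsum (hsumm i) 0 (fun k _ => hwnn k i)
    simpa [hw0 i] using this
  have hvpos : ∀ i, 0 < v i := fun i => zero_lt_one.trans_le (hv1 i)
  have hAv : ∀ i, (∑ j, A i j * v j) = v i - 1 := by
    intro i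
    have hsum2 : ∀ j : Fin n, Summable (fun k => A i j * wseq k j) :=
      fun j => (hsumm j).mul_left _
    have hc : (∑ j, A i j * v j) = ∑' k, wseq (k + 1) i := by
      calc (∑ j, A i j * v j) = ∑ j, ∑' k, A i j * wseq k j := by
            apply Finset.sum_congr rfl
            intro j _
            rw [tsum_mul_left]
        _ = ∑' k, ∑ j, A i j * wseq k j := (Summable.tsum_finsetSum (fun j _ => hsum2 j)).symm
        _ = ∑' k, wseq (k + 1) i := by
            apply tsum_congr
            intro k
            rw [hwsucc]
    have hsplit := Summable.tsum_eq_zero_add (hsumm i)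
    rw [hw0 i] at hsplit
    rw [hc]
    have hvi : v i = 1 + ∑' k, wseq (k + 1) i := hsplit
    linarith
  set T : ℝ := Finset.univ.sup' Finset.univ_nonempty v with hT
  have hTge : ∀ i, v i ≤ T := fun i => Finset.le_sup' v (Finset.mem_univ i)
  have hT1 : 1 ≤ T := le_trans (hv1 (Classical.arbitrary _)) (hTge _)
  have hT0 : 0 < T := by linarith
  have hinv : 0 < 1 / T := by positivity
  have hinv1 : 1 / T ≤ 1 := by
    rw [div_le_one hT0]; exact hT1
  refine ⟨v, 1 - 1 / T, hvpos, by linarith, by linarith, ?_⟩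
  intro i
  have h1 : (∑ j, |B i j| * v j) = v i - 1 := by
    have := hAv i
    simpa [hA, Matrix.map_apply] using this
  have h2 : v i / T ≤ 1 := (div_le_one hT0).mpr (hTge i)
  have h3 : (1 - 1 / T) * v i = v i - v i / T := by ring
  rw [h1, h3]
  linarith

end SpectralPart

/-- If every complex eigenvalue of the entrywise absolute-value matrix `|B|` has modulus
strictly less than 1 (i.e. the spectral radius of `|B|` is `< 1`), then there are `v > 0`
and `α < 1` with `|B| v ≤ α v` componentwise; consequently `x = B x + c` has a unique
solution and every chaotic relaxation for `(B, c)` converges to it. -/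
theorem chaotic_relaxation_converges_of_spectral_radius_lt_one
    {n : ℕ} (hn : 1 ≤ n) (B : Matrix (Fin n) (Fin n) ℝ) (c : Fin n → ℝ)
    (hspec : ∀ μ : ℂ,
      (∃ w : Fin n → ℂ, w ≠ 0 ∧
        (B.map (fun t : ℝ => ((|t| : ℝ) : ℂ))).mulVec w = μ • w) →
      ‖μ‖ < 1) :
    (∃ (v : Fin n → ℝ) (a : ℝ), (∀ i, 0 < v i) ∧ a < 1 ∧
        ∀ i, (∑ j : Fin n, |B i j| * v j) ≤ a * v i) ∧
    (∃! xs : Fin n → ℝ, xs = B.mulVec xs + c) ∧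
    ∀ xs : Fin n → ℝ, xs = B.mulVec xs + c →
      ∀ (x : ℕ → Fin n → ℝ) (s : Fin n → ℕ → ℕ) (u : ℕ → Fin n),
        IsChaoticRelaxation B c x s u →
        Tendsto x atTop (𝓝 xs) := by

  obtain ⟨v, a, hv, ha0, ha1, hBv⟩ := cm_exists_v hn B hspec
  have hzero := cm_fixed_zero hn B v a hv ha1 hBv
  refine ⟨⟨v, a, hv, ha1, hBv⟩, ?_, ?_⟩
  · -- existence and uniqueness of the fixed point
    have hinj : Function.Injective ((1 - B).mulVecLin) := by
      rw [← LinearMap.ker_eq_bot, LinearMap.ker_eq_bot']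
      intro d hd
      apply hzero
      have hd' : (1 - B).mulVec d = 0 := hd
      rw [Matrix.sub_mulVec, Matrix.one_mulVec] at hd'
      have := sub_eq_zero.mp hd'
      exact this
    have hsurj := LinearMap.injective_iff_surjective.mp hinj
    obtain ⟨x0, hx0⟩ := hsurj c
    have hx0' : x0 = B.mulVec x0 + c := by
      have h1 : (1 - B).mulVec x0 = c := hx0
      rw [Matrix.sub_mulVec, Matrix.one_mulVec] at h1
      have h2 := sub_eq_iff_eq_add.mp h1
      conv_lhs => rw [h2]
      exact add_comm _ _
    refine ⟨x0, hx0', ?_⟩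
    intro y hy
    have hdiff : y - x0 = B.mulVec (y - x0) := by
      rw [Matrix.mulVec_sub]
      conv_lhs => rw [hy, hx0']
      abel
    have := hzero (y - x0) hdiff
    exact sub_eq_zero.mp this
  · intro xs hxs x s u hrel
    exact cm_converges hn B c v a hv ha0 ha1 hBv xs hxs x s u hrel
end

section
/- Suppose no vector v ∈ ℝⁿ with v > 0 and scalar α < 1 satisfy |B| v ≤ α v componentwise. Then there exist a vector c ∈ ℝⁿ, an initial vector x⁰ ∈ ℝⁿ, and admissible shift functions and an admissible update function (depending only on B) such that the resulting chaotic relaxation for (B, c) does not converge. -/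
open Filter Topology

namespace CRaux
open scoped Classical
variable {n : ℕ}

noncomputable def cv (B : Matrix (Fin n) (Fin n) ℝ) : Fin n → ℝ := fun i => -1 - ∑ γ, B i γ
noncomputable def hv (B : Matrix (Fin n) (Fin n) ℝ) : ℕ → Fin n → ℝ
  | 0 => fun _ => 1
  | k+1 => fun i => ∑ γ, |B i γ| * hv B k γ
noncomputable def mv (B : Matrix (Fin n) (Fin n) ℝ) : ℕ → Fin n → ℝ
  | 0 => fun _ => 0
  | k+1 => fun i => (∑ γ, B i γ * mv B k γ) + cv B i
noncomputable def pv (B : Matrix (Fin n) (Fin n) ℝ) (k : ℕ) (i : Fin n) : ℝ :=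
  mv B k i + hv B k i
noncomputable def qv (B : Matrix (Fin n) (Fin n) ℝ) (k : ℕ) (i : Fin n) : ℝ :=
  mv B k i - hv B k i
noncomputable def xv (B : Matrix (Fin n) (Fin n) ℝ) : ℕ → Fin n → ℝ := fun t γ =>
  if t < γ.val + 2 then 1
  else if ((t - γ.val - 2) / n) % 2 = 1 then pv B (((t - γ.val - 2) / n + 1) / 2) γ
  else qv B (((t - γ.val - 2) / n) / 2) γ
def uv (hn : 0 < n) : ℕ → Fin n := fun j => ⟨(j - 1) % n, Nat.mod_lt _ hn⟩
noncomputable def tsel (hn : 0 < n) (B : Matrix (Fin n) (Fin n) ℝ) : Fin n → ℕ → ℕ :=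
  fun γ j =>
  let m' := (j - 1) / n
  let k := (m' - 1) / 2
  if m' = 0 then 1
  else if (if m' % 2 = 1 then 0 ≤ B (uv hn j) γ else B (uv hn j) γ < 0) then
    (if k = 0 then 1 else n * (2 * k - 1) + γ.val + 2)
  else n * (2 * k) + γ.val + 2
noncomputable def sv (hn : 0 < n) (B : Matrix (Fin n) (Fin n) ℝ) : Fin n → ℕ → ℕ :=
  fun γ j => j - tsel hn B γ j
lemma pv_zero (B : Matrix (Fin n) (Fin n) ℝ) (γ : Fin n) : pv B 0 γ = 1 := by
  simp [pv, mv, hv]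
lemma qv_zero (B : Matrix (Fin n) (Fin n) ℝ) (γ : Fin n) : qv B 0 γ = -1 := by
  simp [qv, mv, hv]
lemma xv_eval_one (B : Matrix (Fin n) (Fin n) ℝ) {t : ℕ} (γ : Fin n) (h : t ≤ γ.val + 1) :
    xv B t γ = 1 := by
  simp [xv, Nat.lt_succ_of_le h]
lemma xv_eval_q (hn : 0 < n) (B : Matrix (Fin n) (Fin n) ℝ) (k : ℕ) (γ : Fin n) :
    xv B (n * (2 * k) + γ.val + 2) γ = qv B k γ := by
  have h1 : ¬ (n * (2 * k) + γ.val + 2 < γ.val + 2) := by omega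
  have h2 : n * (2 * k) + γ.val + 2 - γ.val - 2 = n * (2 * k) := by omega
  have h3 : n * (2 * k) / n = 2 * k := Nat.mul_div_cancel_left _ hn
  simp [xv, h1, h2, h3, Nat.mul_div_cancel_left, Nat.mul_mod_right]
lemma xv_eval_p (hn : 0 < n) (B : Matrix (Fin n) (Fin n) ℝ) {k : ℕ} (hk : 1 ≤ k) (γ : Fin n) :
    xv B (n * (2 * k - 1) + γ.val + 2) γ = pv B k γ := by
  have h1 : ¬ (n * (2 * k - 1) + γ.val + 2 < γ.val + 2) := by omega
  have h2 : n * (2 * k - 1) + γ.val + 2 - γ.val - 2 = n * (2 * k - 1) := by omega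
  have h3 : n * (2 * k - 1) / n = 2 * k - 1 := Nat.mul_div_cancel_left _ hn
  have h4 : (2 * k - 1) % 2 = 1 := by omega
  have h5 : (2 * k - 1 + 1) / 2 = k := by omega
  simp [xv, h1, h2, h3, h4, h5]
lemma xv_sel (hn : 0 < n) (B : Matrix (Fin n) (Fin n) ℝ) {j : ℕ} (hj : 1 ≤ j)
    (hm : 1 ≤ (j - 1) / n) (γ : Fin n) :
    xv B (j - sv hn B γ j) γ =
      (if (if ((j - 1) / n) % 2 = 1 then 0 ≤ B (uv hn j) γ else B (uv hn j) γ < 0)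
        then pv B (((j - 1) / n - 1) / 2) γ else qv B (((j - 1) / n - 1) / 2) γ) := by
  set m' := (j - 1) / n with hm'
  set k := (m' - 1) / 2 with hk
  have hdm : n * m' + (j - 1) % n = j - 1 := Nat.div_add_mod _ _
  have hα : (j - 1) % n < n := Nat.mod_lt _ hn
  have e1 : n * (2 * k) + n = n * (2 * k + 1) := by ring
  have e2 : n * (2 * k + 1) ≤ n * m' := Nat.mul_le_mul_left n (by omega)
  have ht_q : n * (2 * k) + γ.val + 2 ≤ j := by omega
  have hmne : ¬ m' = 0 := by omega
  by_cases hsign : (if m' % 2 = 1 then 0 ≤ B (uv hn j) γ else B (uv hn j) γ < 0)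
  · rw [if_pos hsign]
    by_cases hk0 : k = 0
    · have htsel : tsel hn B γ j = 1 := by
        simp only [tsel, ← hm', ← hk, if_neg hmne, if_pos hsign, if_pos hk0]
      have : j - sv hn B γ j = 1 := by
        simp only [sv, htsel]; omega
      rw [this, xv_eval_one B γ (by omega), hk0, pv_zero]
    · have hk1 : 1 ≤ k := by omega
      have e3 : n * (2 * k - 1) + n = n * (2 * k) := by
        rw [← Nat.mul_succ]; congr 1; omega
      have htsel : tsel hn B γ j = n * (2 * k - 1) + γ.val + 2 := by
        simp only [tsel, ← hm', ← hk, if_neg hmne, if_pos hsign, if_neg hk0]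
      have : j - sv hn B γ j = n * (2 * k - 1) + γ.val + 2 := by
        simp only [sv, htsel]; omega
      rw [this, xv_eval_p hn B hk1 γ]
  · rw [if_neg hsign]
    have htsel : tsel hn B γ j = n * (2 * k) + γ.val + 2 := by
      simp only [tsel, ← hm', ← hk, if_neg hmne, if_neg hsign]
    have : j - sv hn B γ j = n * (2 * k) + γ.val + 2 := by
      simp only [sv, htsel]; omega
    rw [this, xv_eval_q hn B k γ]

lemma xv_update (hn : 0 < n) (B : Matrix (Fin n) (Fin n) ℝ) {j : ℕ} (hj : 1 ≤ j) :
    xv B (j + 1) (uv hn j) =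
      (∑ γ, B (uv hn j) γ * xv B (j - sv hn B γ j) γ) + cv B (uv hn j) := by
  obtain ⟨m', hm'⟩ : ∃ m', (j - 1) / n = m' := ⟨_, rfl⟩
  have hdm : n * m' + (j - 1) % n = j - 1 := by rw [← hm']; exact Nat.div_add_mod _ _
  have hα : (j - 1) % n < n := Nat.mod_lt _ hn
  have hval : (uv hn j).val = (j - 1) % n := rfl
  by_cases hm0 : m' = 0
  · -- warm-up step : produce -1
    have hdm0 : (j - 1) % n = j - 1 := by rw [hm0] at hdm; simpa using hdm
    have hLHS : xv B (j + 1) (uv hn j) = -1 := by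
      have e : j + 1 = n * (2 * 0) + (uv hn j).val + 2 := by rw [hval, hdm0]; omega
      rw [e, xv_eval_q hn B 0 (uv hn j), qv_zero]
    have hsel : ∀ γ : Fin n, j - sv hn B γ j = 1 := by
      intro γ
      have ht : tsel hn B γ j = 1 := by simp only [tsel, hm', if_pos hm0]
      simp only [sv, ht]; omega
    have hRHS : (∑ γ, B (uv hn j) γ * xv B (j - sv hn B γ j) γ) + cv B (uv hn j) = -1 := by
      have h2 : ∀ γ : Fin n, B (uv hn j) γ * xv B (j - sv hn B γ j) γ = B (uv hn j) γ := by
        intro γ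
        rw [hsel γ, xv_eval_one B γ (by omega), mul_one]
      rw [Finset.sum_congr rfl (fun γ _ => h2 γ)]
      simp [cv]
    rw [hLHS, hRHS]
  · have hm1 : 1 ≤ m' := Nat.pos_of_ne_zero hm0
    obtain ⟨k, hk⟩ : ∃ k, (m' - 1) / 2 = k := ⟨_, rfl⟩
    have hsum : (∑ γ, B (uv hn j) γ * xv B (j - sv hn B γ j) γ) =
        ∑ γ, B (uv hn j) γ *
          (if (if m' % 2 = 1 then 0 ≤ B (uv hn j) γ else B (uv hn j) γ < 0)
            then pv B k γ else qv B k γ) := by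
      refine Finset.sum_congr rfl fun γ _ => ?_
      rw [xv_sel hn B hj (by omega) γ, hm', hk]
    rw [hsum]
    by_cases hpar : m' % 2 = 1
    · -- odd round: produce pv (k+1)
      have hm2 : m' = 2 * (k + 1) - 1 := by omega
      have hnm : n * (2 * (k + 1) - 1) = n * m' := by rw [← hm2]
      have hLHS : xv B (j + 1) (uv hn j) = pv B (k + 1) (uv hn j) := by
        have e : j + 1 = n * (2 * (k + 1) - 1) + (uv hn j).val + 2 := by
          rw [hval, hnm]; omega
        rw [e, xv_eval_p hn B (by omega) (uv hn j)]
      rw [hLHS]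
      have hterm : ∀ γ : Fin n,
          B (uv hn j) γ * (if (if m' % 2 = 1 then 0 ≤ B (uv hn j) γ else B (uv hn j) γ < 0)
            then pv B k γ else qv B k γ)
          = B (uv hn j) γ * mv B k γ + |B (uv hn j) γ| * hv B k γ := by
        intro γ
        simp only [if_pos hpar]
        by_cases hb : 0 ≤ B (uv hn j) γ
        · rw [if_pos hb, abs_of_nonneg hb, pv]; ring
        · rw [if_neg hb, abs_of_neg (lt_of_not_ge hb), qv]; ring
      rw [Finset.sum_congr rfl (fun γ _ => hterm γ), Finset.sum_add_distrib]
      simp only [pv, mv, hv]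
      ring
    · -- even round: produce qv (k+1)
      have hm2 : m' = 2 * (k + 1) := by omega
      have hnm : n * (2 * (k + 1)) = n * m' := by rw [← hm2]
      have hLHS : xv B (j + 1) (uv hn j) = qv B (k + 1) (uv hn j) := by
        have e : j + 1 = n * (2 * (k + 1)) + (uv hn j).val + 2 := by
          rw [hval, hnm]; omega
        rw [e, xv_eval_q hn B (k + 1) (uv hn j)]
      rw [hLHS]
      have hterm : ∀ γ : Fin n,
          B (uv hn j) γ * (if (if m' % 2 = 1 then 0 ≤ B (uv hn j) γ else B (uv hn j) γ < 0)
            then pv B k γ else qv B k γ)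
          = B (uv hn j) γ * mv B k γ - |B (uv hn j) γ| * hv B k γ := by
        intro γ
        simp only [if_neg hpar]
        by_cases hb : B (uv hn j) γ < 0
        · rw [if_pos hb, abs_of_neg hb, pv]; ring
        · rw [if_neg hb, abs_of_nonneg (le_of_not_gt hb), qv]; ring
      rw [Finset.sum_congr rfl (fun γ _ => hterm γ), Finset.sum_sub_distrib]
      simp only [qv, mv, hv]
      ring

lemma hv_nonneg (B : Matrix (Fin n) (Fin n) ℝ) (k : ℕ) (i : Fin n) : 0 ≤ hv B k i := by
  induction k generalizing i with
  | zero => norm_num [hv]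
  | succ k ih =>
    simp only [hv]
    exact Finset.sum_nonneg fun γ _ => mul_nonneg (abs_nonneg _) (ih γ)

lemma xv_step_ne (hn : 0 < n) (B : Matrix (Fin n) (Fin n) ℝ) {j : ℕ} (hj : 1 ≤ j)
    {i : Fin n} (hi : i ≠ uv hn j) : xv B (j + 1) i = xv B j i := by
  have hiv : i.val ≠ (j - 1) % n := by
    intro h; apply hi; apply Fin.ext; simpa [uv] using h
  by_cases h1 : j + 1 < i.val + 2
  · have h2 : j < i.val + 2 := by omega
    simp [xv, h1, h2]
  · by_cases h2 : j < i.val + 2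
    · exfalso
      have : j = i.val + 1 := by omega
      apply hiv
      rw [this]
      simp [Nat.mod_eq_of_lt i.isLt]
    · have hd : ¬ n ∣ (j - i.val - 1) := by
        rintro ⟨c, hc⟩
        apply hiv
        have : j - 1 = i.val + n * c := by omega
        rw [this, Nat.add_mul_mod_self_left, Nat.mod_eq_of_lt i.isLt]
      have hτ : j + 1 - i.val - 2 = (j - i.val - 2) + 1 := by omega
      have hdiv : ((j - i.val - 2) + 1) / n = (j - i.val - 2) / n := by
        have hnd : ¬ n ∣ (j - i.val - 2) + 1 := by
          intro h; apply hd
          have e : j - i.val - 2 + 1 = j - i.val - 1 := by omega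
          rwa [e] at h
        rw [Nat.succ_div, if_neg hnd, add_zero]
      simp only [xv, if_neg h1, if_neg h2, hτ, hdiv]

lemma sv_le (hn : 0 < n) (B : Matrix (Fin n) (Fin n) ℝ) (γ : Fin n) {j : ℕ} (hj : 1 ≤ j) :
    sv hn B γ j ≤ min (j - 1) (4 * n) := by
  obtain ⟨m', hm'⟩ : ∃ m', (j - 1) / n = m' := ⟨_, rfl⟩
  obtain ⟨k, hk⟩ : ∃ k, (m' - 1) / 2 = k := ⟨_, rfl⟩
  have hdm : n * m' + (j - 1) % n = j - 1 := by rw [← hm']; exact Nat.div_add_mod _ _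
  have hα : (j - 1) % n < n := Nat.mod_lt _ hn
  have hts : 1 ≤ tsel hn B γ j ∧ j ≤ tsel hn B γ j + 4 * n := by
    by_cases hm0 : m' = 0
    · have ht : tsel hn B γ j = 1 := by simp only [tsel, hm', if_pos hm0]
      rw [hm0] at hdm
      rw [ht]
      omega
    · have hm1 : 1 ≤ m' := Nat.pos_of_ne_zero hm0
      have hb1 : n * m' ≤ n * (2 * k + 2) := Nat.mul_le_mul_left n (by omega)
      have hb2 : n * (2 * k + 2) = n * (2 * k) + (n + n) := by ring
      by_cases hsign : (if m' % 2 = 1 then 0 ≤ B (uv hn j) γ else B (uv hn j) γ < 0)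
      · by_cases hk0 : k = 0
        · have ht : tsel hn B γ j = 1 := by
            simp only [tsel, hm', hk, if_neg hm0, if_pos hsign, if_pos hk0]
          subst hk0
          rw [ht]
          omega
        · have hk1 : 1 ≤ k := Nat.pos_of_ne_zero hk0
          have hb3 : n * (2 * k - 1) + n = n * (2 * k) := by
            rw [← Nat.mul_succ]; congr 1; omega
          have ht : tsel hn B γ j = n * (2 * k - 1) + γ.val + 2 := by
            simp only [tsel, hm', hk, if_neg hm0, if_pos hsign, if_neg hk0]
          rw [ht]
          omega
      · have ht : tsel hn B γ j = n * (2 * k) + γ.val + 2 := by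
          simp only [tsel, hm', hk, if_neg hm0, if_neg hsign]
        rw [ht]
        omega
  simp only [sv]
  omega

lemma uv_surj (hn : 0 < n) (i : Fin n) (j : ℕ) : ∃ l, j < l ∧ uv hn l = i := by
  refine ⟨n * (j + 1) + i.val + 1, ?_, ?_⟩
  · have : j + 1 ≤ n * (j + 1) := Nat.le_mul_of_pos_left _ hn
    omega
  · apply Fin.ext
    show (n * (j + 1) + i.val + 1 - 1) % n = i.val
    have e : n * (j + 1) + i.val + 1 - 1 = n * (j + 1) + i.val := by omega
    rw [e, Nat.mul_add_mod, Nat.mod_eq_of_lt i.isLt]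

lemma exists_big (hn : 0 < n) (B : Matrix (Fin n) (Fin n) ℝ)
    (hno : ¬ ∃ (v : Fin n → ℝ) (a : ℝ), (∀ i, 0 < v i) ∧ a < 1 ∧
        ∀ i, (∑ j : Fin n, |B i j| * v j) ≤ a * v i) :
    ∀ k : ℕ, ∃ i : Fin n, 1/2 < hv B k i := by
  by_contra hcon
  push_neg at hcon
  obtain ⟨k, hk⟩ := hcon
  have hk0 : k ≠ 0 := by
    intro h; subst h
    have := hk ⟨0, hn⟩
    norm_num [hv] at this
  have hkR : ((k : ℝ))⁻¹ * (k : ℝ) = 1 := by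
    rw [inv_mul_cancel₀]
    exact_mod_cast hk0
  set θ : ℝ := (2 : ℝ) ^ ((k : ℝ))⁻¹ with hθdef
  have hθ1 : 1 < θ := by
    rw [hθdef]
    apply Real.one_lt_rpow_iff_of_pos (by norm_num) |>.mpr
    left
    refine ⟨by norm_num, ?_⟩
    have hkpos : (0:ℝ) < (k:ℝ) := by exact_mod_cast Nat.pos_of_ne_zero hk0
    positivity
  have hθ0 : 0 < θ := lt_trans one_pos hθ1
  have hθk : θ ^ k = 2 := by
    rw [hθdef, ← Real.rpow_natCast ((2:ℝ) ^ ((k:ℝ))⁻¹) k, ← Real.rpow_mul (by norm_num), hkR,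
      Real.rpow_one]
  apply hno
  refine ⟨fun i => ∑ m ∈ Finset.range k, θ ^ m * hv B m i, θ⁻¹, ?_, ?_, ?_⟩
  · intro i
    dsimp only
    have h0 : (1 : ℝ) ≤ ∑ m ∈ Finset.range k, θ ^ m * hv B m i := by
      have h1 : θ ^ 0 * hv B 0 i = 1 := by simp [hv]
      calc (1:ℝ) = θ ^ 0 * hv B 0 i := h1.symm
        _ ≤ _ := Finset.single_le_sum
            (fun m _ => mul_nonneg (pow_nonneg hθ0.le m) (hv_nonneg B m i))
            (Finset.mem_range.mpr (Nat.pos_of_ne_zero hk0))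
    linarith
  · exact inv_lt_one_of_one_lt₀ hθ1
  · intro i
    dsimp only
    have hswap : (∑ γ : Fin n, |B i γ| * ∑ m ∈ Finset.range k, θ ^ m * hv B m γ)
        = ∑ m ∈ Finset.range k, θ ^ m * hv B (m + 1) i := by
      calc (∑ γ : Fin n, |B i γ| * ∑ m ∈ Finset.range k, θ ^ m * hv B m γ)
          = ∑ γ : Fin n, ∑ m ∈ Finset.range k, |B i γ| * (θ ^ m * hv B m γ) := by
            simp_rw [Finset.mul_sum]
        _ = ∑ m ∈ Finset.range k, ∑ γ : Fin n, |B i γ| * (θ ^ m * hv B m γ) :=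
            Finset.sum_comm
        _ = ∑ m ∈ Finset.range k, θ ^ m * hv B (m + 1) i := by
            refine Finset.sum_congr rfl fun m _ => ?_
            simp only [hv, Finset.mul_sum]
            exact Finset.sum_congr rfl fun γ _ => by ring
    rw [hswap]
    have hkey : θ * (∑ m ∈ Finset.range k, θ ^ m * hv B (m + 1) i)
        ≤ ∑ m ∈ Finset.range k, θ ^ m * hv B m i := by
      have e1 : θ * (∑ m ∈ Finset.range k, θ ^ m * hv B (m + 1) i)
          = ∑ m ∈ Finset.range k, θ ^ (m + 1) * hv B (m + 1) i := by
        rw [Finset.mul_sum]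
        exact Finset.sum_congr rfl fun m _ => by rw [pow_succ]; ring
      have e2 : (∑ m ∈ Finset.range (k + 1), θ ^ m * hv B m i)
          = (∑ m ∈ Finset.range k, θ ^ (m + 1) * hv B (m + 1) i) + θ ^ 0 * hv B 0 i :=
        Finset.sum_range_succ' _ k
      have e3 : (∑ m ∈ Finset.range (k + 1), θ ^ m * hv B m i)
          = (∑ m ∈ Finset.range k, θ ^ m * hv B m i) + θ ^ k * hv B k i :=
        Finset.sum_range_succ _ k
      have e4 : θ ^ k * hv B k i ≤ 1 := by
        rw [hθk]; linarith [hk i]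
      have e5 : θ ^ 0 * hv B 0 i = 1 := by simp [hv]
      rw [e1]
      linarith
    have hfin := mul_le_mul_of_nonneg_left hkey (inv_nonneg.mpr hθ0.le)
    rw [← mul_assoc, inv_mul_cancel₀ (ne_of_gt hθ0), one_mul] at hfin
    exact hfin

end CRaux

/-- If no `v > 0` and `α < 1` satisfy `|B| v ≤ α v` componentwise, then there exist a
right-hand side `c`, an initial vector (the sequence itself), admissible shift functions
and an admissible update function such that the resulting chaotic relaxation for `(B, c)`
does not converge. -/
theorem exists_divergent_chaotic_relaxation
    {n : ℕ} (hn : 1 ≤ n) (B : Matrix (Fin n) (Fin n) ℝ)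
    (hno : ¬ ∃ (v : Fin n → ℝ) (a : ℝ), (∀ i, 0 < v i) ∧ a < 1 ∧
        ∀ i, (∑ j : Fin n, |B i j| * v j) ≤ a * v i) :
    ∃ (c : Fin n → ℝ) (x : ℕ → Fin n → ℝ) (s : Fin n → ℕ → ℕ) (u : ℕ → Fin n),
      IsChaoticRelaxation B c x s u ∧
      ¬ ∃ xs : Fin n → ℝ, Tendsto x atTop (𝓝 xs) := by
  have hn0 : 0 < n := hn
  refine ⟨CRaux.cv B, CRaux.xv B, CRaux.sv hn0 B, CRaux.uv hn0, ⟨?_, ⟨4 * n, ?_⟩, ?_⟩, ?_⟩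
  · intro j hj i
    constructor
    · intro hne
      exact CRaux.xv_step_ne hn0 B hj hne
    · intro heq
      subst heq
      exact CRaux.xv_update hn0 B hj
  · intro α j hj
    exact CRaux.sv_le hn0 B α hj
  · intro i j _
    exact CRaux.uv_surj hn0 i j
  · rintro ⟨xs, hx⟩
    have key := CRaux.exists_big hn0 B hno
    have hcomp : ∀ i : Fin n, Tendsto (fun t => CRaux.xv B t i) atTop (𝓝 (xs i)) :=
      fun i => tendsto_pi_nhds.mp hx i
    have hev : ∀ i : Fin n, ∃ N : ℕ, ∀ t ≥ N, |CRaux.xv B t i - xs i| < 1/2 := by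
      intro i
      have h := Metric.tendsto_atTop.mp (hcomp i) (1/2) (by norm_num)
      simpa [Real.dist_eq] using h
    choose N hN using hev
    set T := Finset.univ.sup N with hT
    obtain ⟨i, hi⟩ := key (T + 1)
    have hNi : N i ≤ T := Finset.le_sup (Finset.mem_univ i)
    have h1 : CRaux.xv B (n * (2 * (T + 1) - 1) + i.val + 2) i = CRaux.pv B (T + 1) i :=
      CRaux.xv_eval_p hn0 B (by omega) i
    have h2 : CRaux.xv B (n * (2 * (T + 1)) + i.val + 2) i = CRaux.qv B (T + 1) i :=
      CRaux.xv_eval_q hn0 B (T + 1) i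
    have ht1 : N i ≤ n * (2 * (T + 1) - 1) + i.val + 2 := by
      have := Nat.le_mul_of_pos_left (2 * (T + 1) - 1) hn0
      omega
    have ht2 : N i ≤ n * (2 * (T + 1)) + i.val + 2 := by
      have := Nat.le_mul_of_pos_left (2 * (T + 1)) hn0
      omega
    have e1 := hN i _ ht1
    have e2 := hN i _ ht2
    rw [h1] at e1
    rw [h2] at e2
    have hpq : CRaux.pv B (T + 1) i - CRaux.qv B (T + 1) i = 2 * CRaux.hv B (T + 1) i := by
      simp only [CRaux.pv, CRaux.qv]; ring
    rw [abs_lt] at e1 e2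
    obtain ⟨e11, e12⟩ := e1
    obtain ⟨e21, e22⟩ := e2
    linarith
end

section
/- L is invertible, and every block-asynchronous iteration (x^j) for the system L x = r reaches the exact solution in finitely many steps: there exists J ∈ ℕ such that x^j = L⁻¹ r for all j ≥ J. -/
open Filter Topology

/-- The `(i,j)`-th `b × b` block of a matrix indexed by `Fin N × Fin b`. -/
def blockOf {N b : ℕ} (M : Matrix (Fin N × Fin b) (Fin N × Fin b) ℝ) (i j : Fin N) :
    Matrix (Fin b) (Fin b) ℝ :=
  Matrix.of fun k l => M (i, k) (j, l)

/-- The strictly lower block triangular part `L̃` of a matrix (blocks of size `b × b`). -/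
def strictBlockLowerPart {N b : ℕ} (M : Matrix (Fin N × Fin b) (Fin N × Fin b) ℝ) :
    Matrix (Fin N × Fin b) (Fin N × Fin b) ℝ :=
  Matrix.of fun p q => if q.1 < p.1 then M p q else 0

/-- A block-asynchronous iteration for the lower block triangular system `L x = r`:
at each step `j ≥ 1` the block `u j` is updated via
`x^{j+1}_i = L_{ii}⁻¹ (r_i - (L̃ z)_i)` where `z_α = x^{j - s_α(j)}_α`, with bounded
shifts and a fair update function. -/
def IsBlockAsyncTriIteration {N b : ℕ}
    (L : Matrix (Fin N × Fin b) (Fin N × Fin b) ℝ) (r : (Fin N × Fin b) → ℝ)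
    (x : ℕ → (Fin N × Fin b) → ℝ) (s : (Fin N × Fin b) → ℕ → ℕ)
    (u : ℕ → Fin N) : Prop :=
  (∀ j : ℕ, 1 ≤ j → ∀ i : Fin N,
      (i ≠ u j → ∀ k : Fin b, x (j + 1) (i, k) = x j (i, k)) ∧
      (i = u j → ∀ k : Fin b,
        x (j + 1) (i, k) =
          (blockOf L i i)⁻¹.mulVec
            (fun k' => r (i, k') -
              (strictBlockLowerPart L).mulVec (fun q => x (j - s q j) q) (i, k')) k)) ∧
  (∃ shat : ℕ, ∀ (q : Fin N × Fin b) (j : ℕ), 1 ≤ j → s q j ≤ min (j - 1) shat) ∧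
  (∀ (i : Fin N) (j : ℕ), 1 ≤ j → ∃ l : ℕ, j < l ∧ u l = i)

lemma mulVec_block_split {N b : ℕ} (L : Matrix (Fin N × Fin b) (Fin N × Fin b) ℝ)
    (hlow : ∀ p q : Fin N × Fin b, p.1 < q.1 → L p q = 0)
    (z : (Fin N × Fin b) → ℝ) (i : Fin N) (k' : Fin b) :
    L.mulVec z (i, k') =
      (blockOf L i i).mulVec (fun l => z (i, l)) k'
        + (strictBlockLowerPart L).mulVec z (i, k') := by
  classical
  simp only [Matrix.mulVec, dotProduct, blockOf, strictBlockLowerPart, Matrix.of_apply]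
  have h1 : (∑ l : Fin b, L (i, k') (i, l) * z (i, l))
      = ∑ q : Fin N × Fin b, (if q.1 = i then L (i, k') q * z q else 0) := by
    rw [Fintype.sum_prod_type]
    rw [Finset.sum_eq_single i]
    · simp
    · intro j _ hj; simp [hj]
    · simp
  rw [h1, ← Finset.sum_add_distrib]
  apply Finset.sum_congr rfl
  intro q _
  rcases lt_trichotomy q.1 i with h | h | h
  · simp [h, ne_of_lt h]
  · simp [h, lt_irrefl]
  · have h0 := hlow (i, k') q h
    simp [h0, ne_of_gt h, not_lt.mpr (le_of_lt h)]

lemma strictPart_congr {N b : ℕ} (L : Matrix (Fin N × Fin b) (Fin N × Fin b) ℝ)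
    (z w : (Fin N × Fin b) → ℝ) (i : Fin N) (k' : Fin b)
    (h : ∀ q : Fin N × Fin b, q.1 < i → z q = w q) :
    (strictBlockLowerPart L).mulVec z (i, k') = (strictBlockLowerPart L).mulVec w (i, k') := by
  simp only [Matrix.mulVec, dotProduct, strictBlockLowerPart, Matrix.of_apply]
  apply Finset.sum_congr rfl
  intro q _
  by_cases hq : q.1 < i
  · simp [hq, h q hq]
  · simp [hq]

/-- `L` is invertible, and every block-asynchronous iteration for `L x = r` reaches the
exact solution `L⁻¹ r` in finitely many steps. -/
theorem blockAsync_triangular_converges_finitely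
    {N b : ℕ} (hb : 1 ≤ b) (hN : 1 ≤ N)
    (L : Matrix (Fin N × Fin b) (Fin N × Fin b) ℝ)
    (hlow : ∀ p q : Fin N × Fin b, p.1 < q.1 → L p q = 0)
    (hdiag : ∀ i : Fin N, IsUnit (blockOf L i i))
    (r : (Fin N × Fin b) → ℝ) :
    IsUnit L ∧
    ∀ (x : ℕ → (Fin N × Fin b) → ℝ) (s : (Fin N × Fin b) → ℕ → ℕ) (u : ℕ → Fin N),
      IsBlockAsyncTriIteration L r x s u →
      ∃ J : ℕ, ∀ j : ℕ, J ≤ j → x j = L⁻¹.mulVec r := by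
  classical
  have hBT : L.BlockTriangular (fun p => OrderDual.toDual p.1) := by
    intro p q h
    exact hlow p q h
  have hdetL : IsUnit L.det := by
    rw [hBT.det]
    apply isUnit_iff_ne_zero.mpr
    rw [Finset.prod_ne_zero_iff]
    intro a _
    set i : Fin N := OrderDual.ofDual a with hi
    let e : Fin b ≃ {p : Fin N × Fin b // (fun p : Fin N × Fin b => OrderDual.toDual p.1) p = a} :=
      { toFun := fun k => ⟨(i, k), rfl⟩
        invFun := fun p => p.1.2
        left_inv := fun k => rfl
        right_inv := fun p => by
          rcases p with ⟨⟨j, k⟩, hp⟩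
          have : j = i := congrArg OrderDual.ofDual hp
          subst this
          rfl }
    have hsq : L.toSquareBlock (fun p : Fin N × Fin b => OrderDual.toDual p.1) a
        = (blockOf L i i).submatrix e.symm e.symm := by
      ext p q
      rcases p with ⟨⟨j, k⟩, hp⟩
      rcases q with ⟨⟨j', l⟩, hq⟩
      have hj : j = i := congrArg OrderDual.ofDual hp
      have hj' : j' = i := congrArg OrderDual.ofDual hq
      subst hj; subst hj'
      rfl
    rw [hsq, Matrix.det_submatrix_equiv_self]
    exact isUnit_iff_ne_zero.mp ((Matrix.isUnit_iff_isUnit_det _).mp (hdiag i))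
  have hL : IsUnit L := (Matrix.isUnit_iff_isUnit_det L).mpr hdetL
  refine ⟨hL, ?_⟩
  intro x s u hiter
  obtain ⟨hupd, ⟨shat, hs⟩, hfair⟩ := hiter
  set y := L⁻¹.mulVec r with hy
  have hLy : L.mulVec y = r := by
    rw [hy, Matrix.mulVec_mulVec, Matrix.mul_nonsing_inv _ hdetL, Matrix.one_mulVec]
  -- the solution is a fixed point of each block update
  have hfp : ∀ (i : Fin N) (k : Fin b),
      y (i, k) = (blockOf L i i)⁻¹.mulVec
        (fun k' => r (i, k') - (strictBlockLowerPart L).mulVec y (i, k')) k := by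
    intro i k
    have hv : (fun k' => r (i, k') - (strictBlockLowerPart L).mulVec y (i, k'))
        = (blockOf L i i).mulVec (fun l => y (i, l)) := by
      funext k'
      have h := mulVec_block_split L hlow y i k'
      rw [hLy] at h
      linarith
    rw [hv, Matrix.mulVec_mulVec,
      Matrix.nonsing_inv_mul _ ((Matrix.isUnit_iff_isUnit_det _).mp (hdiag i)),
      Matrix.one_mulVec]
  -- one update of block i, with all lower blocks settled, produces the exact block
  have hstep : ∀ (T : ℕ) (i : Fin N), 1 ≤ T →
      (∀ j, T ≤ j → ∀ q : Fin N × Fin b, q.1 < i → x j q = y q) →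
      ∀ j, T + shat + 1 ≤ j → u j = i → ∀ k, x (j + 1) (i, k) = y (i, k) := by
    intro T i hT1 hlow' j hj hu k
    have hj1 : 1 ≤ j := by omega
    rw [(hupd j hj1 i).2 hu.symm k]
    have hz : (fun k' => r (i, k') -
          (strictBlockLowerPart L).mulVec (fun q => x (j - s q j) q) (i, k'))
        = fun k' => r (i, k') - (strictBlockLowerPart L).mulVec y (i, k') := by
      funext k'
      congr 1
      apply strictPart_congr
      intro q hq
      have hsb : s q j ≤ shat := le_trans (hs q j hj1) (min_le_right _ _)
      exact hlow' _ (by omega) q hq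
    rw [hz]
    exact (hfp i k).symm
  -- main induction: blocks with index < m are eventually exact
  have hQ : ∀ m : ℕ, ∃ T, 1 ≤ T ∧ ∀ j, T ≤ j → ∀ q : Fin N × Fin b, q.1.val < m →
      x j q = y q := by
    intro m
    induction m with
    | zero => exact ⟨1, le_refl 1, fun j _ q hq => absurd hq (Nat.not_lt_zero _)⟩
    | succ m ih =>
      obtain ⟨T, hT1, hT⟩ := ih
      by_cases hm : m < N
      · set i : Fin N := ⟨m, hm⟩ with hidef
        have hlow' : ∀ j, T ≤ j → ∀ q : Fin N × Fin b, q.1 < i → x j q = y q := by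
          intro j hj q hq
          exact hT j hj q hq
        obtain ⟨l, hl, hul⟩ := hfair i (T + shat + 1) (by omega)
        have hstable : ∀ j, l + 1 ≤ j → ∀ k, x j (i, k) = y (i, k) := by
          intro j hj
          induction j, hj using Nat.le_induction with
          | base => exact hstep T i hT1 hlow' l (by omega) hul
          | succ j hj ihj =>
            intro k
            by_cases hui : u j = i
            · exact hstep T i hT1 hlow' j (by omega) hui k
            · have hj1 : 1 ≤ j := by omega
              rw [(hupd j hj1 i).1 (fun h => hui h.symm) k]
              exact ihj k
        refine ⟨l + 1, by omega, fun j hj q hq => ?_⟩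
        rcases Nat.lt_or_ge q.1.val m with h | h
        · exact hT j (by omega) q h
        · have hq1 : q.1 = i := Fin.ext (by simp [hidef]; omega)
          have := hstable j hj q.2
          rw [show q = (q.1, q.2) from rfl, hq1]
          exact this
      · exact ⟨T, hT1, fun j hj q hq => hT j hj q (by have := q.1.isLt; omega)⟩
  obtain ⟨T, _, hT⟩ := hQ N
  exact ⟨T, fun j hj => funext fun q => hT j hj q q.1.isLt⟩
end

section
/- With the row-major block ordering and the corresponding ordering of the m scalar unknowns, the map h has strictly lower triangular structure: for every x ∈ D_B, every (i,j), (p,q) ∈ S_B with (p,q) not strictly preceding (i,j) (i.e., (i,j) ≺ (p,q) or (i,j) = (p,q)), and all entry positions, the partial derivative of any entry of H_{ij}(x) with respect to any entry of X_{pq} is zero; equivalently, the Jacobian matrix h′(x) ∈ ℝ^{m×m} is strictly lower triangular for every x ∈ D_B. -/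
open Filter Topology

/-- The state space of block unknowns: one `b × b` block for each index pair in `S`. -/
abbrev BlockVec (b N : ℕ) (S : Finset (Fin N × Fin N)) : Type :=
  {p : Fin N × Fin N // p ∈ S} → Fin b → Fin b → ℝ

/-- The block `X_{ij}` of the family `x`, with the convention `X_{ij} = 0` for
`(i,j) ∉ S`. -/
def Xf {b N : ℕ} (S : Finset (Fin N × Fin N)) (x : BlockVec b N S) (i j : Fin N) :
    Matrix (Fin b) (Fin b) ℝ :=
  if h : (i, j) ∈ S then Matrix.of (x ⟨(i, j), h⟩) else 0

/-- The block `H_{ij}(x)` of the block-ILU fixed point map: for `i > j` it is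
`(A_{ij} - ∑_{k<j} X_{ik} X_{kj}) X_{jj}⁻¹`, and for `i ≤ j` it is
`A_{ij} - ∑_{k<i} X_{ik} X_{kj}`. -/
noncomputable def Hmap {b N : ℕ} (S : Finset (Fin N × Fin N))
    (A : Fin N → Fin N → Matrix (Fin b) (Fin b) ℝ) (x : BlockVec b N S) (i j : Fin N) :
    Matrix (Fin b) (Fin b) ℝ :=
  if j < i then
    (A i j - ∑ k ∈ Finset.univ.filter (fun k : Fin N => k < j),
        Xf S x i k * Xf S x k j) * (Xf S x j j)⁻¹
  else
    A i j - ∑ k ∈ Finset.univ.filter (fun k : Fin N => k < i), Xf S x i k * Xf S x k j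

/-- The block-ILU fixed point map `h`. -/
noncomputable def hFun {b N : ℕ} (S : Finset (Fin N × Fin N))
    (A : Fin N → Fin N → Matrix (Fin b) (Fin b) ℝ) :
    BlockVec b N S → BlockVec b N S :=
  fun x p k l => Hmap S A x p.1.1 p.1.2 k l

/-- The domain of definition `D_B`: all diagonal blocks invertible. -/
def DB (b N : ℕ) (S : Finset (Fin N × Fin N)) : Set (BlockVec b N S) :=
  {x | ∀ j : Fin N, IsUnit (Xf S x j j)}


lemma Xf_add_single {b N : ℕ} {S : Finset (Fin N × Fin N)}
    (y : BlockVec b N S) (pq : {p : Fin N × Fin N // p ∈ S})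
    (w : Fin b → Fin b → ℝ) {i j : Fin N} (h : (i, j) ≠ pq.1) :
    Xf S (y + Pi.single pq w) i j = Xf S y i j := by
  unfold Xf
  split_ifs with hm
  · have hne : (⟨(i, j), hm⟩ : {p : Fin N × Fin N // p ∈ S}) ≠ pq := by
      intro hc
      exact h (congrArg Subtype.val hc)
    have hz : (Pi.single pq w : BlockVec b N S) ⟨(i, j), hm⟩ = 0 := by
      rw [Pi.single_eq_of_ne hne]
    simp [Pi.add_apply, hz]
  · rfl

lemma Hmap_add_single {b N : ℕ} {S : Finset (Fin N × Fin N)}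
    (A : Fin N → Fin N → Matrix (Fin b) (Fin b) ℝ)
    (y : BlockVec b N S) (pq : {p : Fin N × Fin N // p ∈ S})
    (w : Fin b → Fin b → ℝ) (i j : Fin N)
    (h1 : i ≤ pq.1.1) (h2 : pq.1.1 = i → j ≤ pq.1.2) :
    Hmap S A (y + Pi.single pq w) i j = Hmap S A y i j := by
  unfold Hmap
  by_cases hji : j < i
  · simp only [if_pos hji]
    have hsum : ∑ k ∈ Finset.univ.filter (fun k : Fin N => k < j),
        Xf S (y + Pi.single pq w) i k * Xf S (y + Pi.single pq w) k j
        = ∑ k ∈ Finset.univ.filter (fun k : Fin N => k < j), Xf S y i k * Xf S y k j := by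
      refine Finset.sum_congr rfl (fun k hk => ?_)
      simp only [Finset.mem_filter] at hk
      have hkj : k < j := hk.2
      have ne1 : (i, k) ≠ pq.1 := by
        intro hc
        have hp : pq.1.1 = i := by rw [← hc]
        have hq : pq.1.2 = k := by rw [← hc]
        have := h2 hp
        rw [hq] at this
        exact absurd hkj (not_lt.2 this)
      have ne2 : (k, j) ≠ pq.1 := by
        intro hc
        have hp : pq.1.1 = k := by rw [← hc]
        have : i ≤ k := hp ▸ h1
        exact absurd (lt_trans hkj hji) (not_lt.2 this)
      rw [Xf_add_single y pq w ne1, Xf_add_single y pq w ne2]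
    have nejj : (j, j) ≠ pq.1 := by
      intro hc
      have hp : pq.1.1 = j := by rw [← hc]
      have : i ≤ j := hp ▸ h1
      exact absurd hji (not_lt.2 this)
    rw [hsum, Xf_add_single y pq w nejj]
  · simp only [if_neg hji]
    have hij : i ≤ j := not_lt.1 hji
    have hsum : ∑ k ∈ Finset.univ.filter (fun k : Fin N => k < i),
        Xf S (y + Pi.single pq w) i k * Xf S (y + Pi.single pq w) k j
        = ∑ k ∈ Finset.univ.filter (fun k : Fin N => k < i), Xf S y i k * Xf S y k j := by
      refine Finset.sum_congr rfl (fun k hk => ?_)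
      simp only [Finset.mem_filter] at hk
      have hki : k < i := hk.2
      have ne1 : (i, k) ≠ pq.1 := by
        intro hc
        have hp : pq.1.1 = i := by rw [← hc]
        have hq : pq.1.2 = k := by rw [← hc]
        have := h2 hp
        rw [hq] at this
        exact absurd (lt_of_lt_of_le hki hij) (not_lt.2 this)
      have ne2 : (k, j) ≠ pq.1 := by
        intro hc
        have hp : pq.1.1 = k := by rw [← hc]
        have : i ≤ k := hp ▸ h1
        exact absurd hki (not_lt.2 this)
      rw [Xf_add_single y pq w ne1, Xf_add_single y pq w ne2]
    rw [hsum]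

/-- With the row-major (block Gaussian elimination) ordering, `h` has strictly lower
triangular structure: at any `x ∈ D_B`, the partial derivative of any entry of
`H_{ij}(x)` with respect to any entry of a block `X_{pq}` that does not strictly precede
`(i,j)` vanishes, i.e. the Jacobian `h'(x)` is strictly lower triangular. -/
theorem hFun_jacobian_strictly_lower_triangular
    {b N : ℕ} (hb : 1 ≤ b) (hN : 1 ≤ N) (S : Finset (Fin N × Fin N))
    (hS : ∀ j : Fin N, (j, j) ∈ S)
    (A : Fin N → Fin N → Matrix (Fin b) (Fin b) ℝ) :
    ∀ x ∈ DB b N S, ∀ ij pq : {p : Fin N × Fin N // p ∈ S},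
      ¬ (pq.1.1 < ij.1.1 ∨ (pq.1.1 = ij.1.1 ∧ pq.1.2 < ij.1.2)) →
      ∀ k l k' l' : Fin b,
        fderiv ℝ (fun y : BlockVec b N S => hFun S A y ij k l) x
          (Pi.single pq (Pi.single k' (Pi.single l' (1 : ℝ)))) = 0 := by
  intro x _hx ij pq hord k l k' l'
  push_neg at hord
  obtain ⟨h1, h2⟩ := hord
  set v : BlockVec b N S := Pi.single pq (Pi.single k' (Pi.single l' (1 : ℝ))) with hv
  set f : BlockVec b N S → ℝ := fun y => hFun S A y ij k l with hf
  have hinv : ∀ (y : BlockVec b N S) (t : ℝ), f (y + t • v) = f y := by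
    intro y t
    have hsv : t • v = Pi.single pq (t • (Pi.single k' (Pi.single l' (1 : ℝ)) : Fin b → Fin b → ℝ)) := by
      rw [hv, Pi.single_smul]
    rw [hsv]
    show Hmap S A (y + Pi.single pq _) ij.1.1 ij.1.2 k l = Hmap S A y ij.1.1 ij.1.2 k l
    rw [Hmap_add_single A y pq _ ij.1.1 ij.1.2 h1 h2]
  by_cases hdiff : DifferentiableAt ℝ f x
  · have hg : HasDerivAt (fun t : ℝ => x + t • v) v 0 := by
      simpa using ((hasDerivAt_id (0 : ℝ)).smul_const v).const_add x
    have hg0 : x + (0 : ℝ) • v = x := by simp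
    have hF : HasFDerivAt f (fderiv ℝ f x) (x + (0 : ℝ) • v) := by
      rw [hg0]; exact hdiff.hasFDerivAt
    have hA : HasDerivAt (fun t : ℝ => f (x + t • v)) (fderiv ℝ f x v) 0 :=
      by have := hF.comp_hasDerivAt (0 : ℝ) hg; exact this
    have hB : HasDerivAt (fun t : ℝ => f (x + t • v)) 0 0 := by
      have hconst : (fun t : ℝ => f (x + t • v)) = fun _ => f x :=
        funext fun t => hinv x t
      rw [hconst]
      exact hasDerivAt_const _ _
    exact hA.unique hB
  · rw [fderiv_zero_of_not_differentiableAt hdiff]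
    rfl
end

section
/- For every x ∈ D_B, every complex eigenvalue of the Jacobian matrix h′(x) ∈ ℝ^{m×m} equals zero; in particular, the spectral radius of the entrywise absolute-value matrix |h′(x)| is zero. -/
open Filter Topology

/-- If `f` is constant along the line `x + t • v`, then `fderiv ℝ f x v = 0`
(using the junk value convention if `f` is not differentiable at `x`). -/
lemma fderiv_apply_eq_zero_of_line_const {E F : Type*} [NormedAddCommGroup E]
    [NormedSpace ℝ E] [NormedAddCommGroup F] [NormedSpace ℝ F]
    (f : E → F) (x v : E) (h : ∀ t : ℝ, f (x + t • v) = f x) :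
    fderiv ℝ f x v = 0 := by
  by_cases hd : DifferentiableAt ℝ f x
  · have hg : HasDerivAt (fun t : ℝ => x + t • v) v (0 : ℝ) := by
      simpa using ((hasDerivAt_id (0 : ℝ)).smul_const v).const_add x
    have hx0 : x + (0 : ℝ) • v = x := by simp
    have h1 : HasDerivAt (fun t : ℝ => f (x + t • v)) (fderiv ℝ f x v) 0 := by
      have := (hx0 ▸ hd.hasFDerivAt).comp_hasDerivAt (0 : ℝ) hg
      simpa [Function.comp_def] using this
    have h2 : HasDerivAt (fun t : ℝ => f (x + t • v)) 0 0 := by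
      simp only [h]; exact hasDerivAt_const _ _
    exact h1.unique h2
  · rw [fderiv_zero_of_not_differentiableAt hd]; rfl

lemma Xf_perturb {b N : ℕ} (S : Finset (Fin N × Fin N)) (x : BlockVec b N S)
    (c : {p : Fin N × Fin N // p ∈ S}) (v : Fin b → Fin b → ℝ) (t : ℝ)
    (p q : Fin N) (hne : c.1 ≠ (p, q)) :
    Xf S (x + t • (Pi.single c v : BlockVec b N S)) p q = Xf S x p q := by
  unfold Xf
  split
  · next h =>
      have hs : (⟨(p, q), h⟩ : {p : Fin N × Fin N // p ∈ S}) ≠ c := by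
        intro hc; exact hne (by rw [← hc])
      congr 1
      show x ⟨(p, q), h⟩ + t • (Pi.single c v : BlockVec b N S) ⟨(p, q), h⟩ = x ⟨(p, q), h⟩
      rw [Pi.single_eq_of_ne hs]
      simp
  · rfl

lemma Hmap_perturb {b N : ℕ} (S : Finset (Fin N × Fin N))
    (A : Fin N → Fin N → Matrix (Fin b) (Fin b) ℝ) (x : BlockVec b N S)
    (c : {p : Fin N × Fin N // p ∈ S}) (v : Fin b → Fin b → ℝ) (t : ℝ)
    (i j : Fin N)
    (hc : ∀ p q : Fin N, (p : ℕ) * N + (q : ℕ) < (i : ℕ) * N + (j : ℕ) → c.1 ≠ (p, q)) :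
    Hmap S A (x + t • (Pi.single c v : BlockVec b N S)) i j = Hmap S A x i j := by
  have hordrow : ∀ p q : Fin N, (p : ℕ) < (i : ℕ) → (p : ℕ) * N + (q : ℕ) < (i : ℕ) * N + (j : ℕ) := by
    intro p q hp
    have hq : (q : ℕ) < N := q.isLt
    have h1 : ((p : ℕ) + 1) * N ≤ (i : ℕ) * N := Nat.mul_le_mul_right N hp
    rw [Nat.add_mul, one_mul] at h1
    omega
  unfold Hmap
  split
  · next hji =>
      congr 1
      · congr 1
        apply Finset.sum_congr rfl
        intro k hk
        have hkj : k < j := (Finset.mem_filter.mp hk).2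
        have h1 : Xf S (x + t • (Pi.single c v : BlockVec b N S)) i k = Xf S x i k := by
          apply Xf_perturb; apply hc; omega
        have h2 : Xf S (x + t • (Pi.single c v : BlockVec b N S)) k j = Xf S x k j := by
          apply Xf_perturb; apply hc; exact hordrow k j (lt_trans hkj hji)
        rw [h1, h2]
      · congr 1
        apply Xf_perturb; apply hc; exact hordrow j j hji
  · next hji =>
      have hij : (i : ℕ) ≤ (j : ℕ) := by
        have := Fin.not_lt.mp hji; exact this
      congr 1
      apply Finset.sum_congr rfl
      intro k hk
      have hki : k < i := (Finset.mem_filter.mp hk).2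
      have h1 : Xf S (x + t • (Pi.single c v : BlockVec b N S)) i k = Xf S x i k := by
        apply Xf_perturb; apply hc; omega
      have h2 : Xf S (x + t • (Pi.single c v : BlockVec b N S)) k j = Xf S x k j := by
        apply Xf_perturb; apply hc; exact hordrow k j hki
      rw [h1, h2]

/-- A matrix that is strictly lower triangular with respect to a rank function has
only zero eigenvalues. -/
lemma eig_zero_of_strict_lower {ι : Type*} [Fintype ι] (M : Matrix ι ι ℂ) (ρ : ι → ℕ)
    (hM : ∀ a c : ι, ¬ ρ c < ρ a → M a c = 0) (μ : ℂ)
    (h : ∃ w : ι → ℂ, w ≠ 0 ∧ M.mulVec w = μ • w) : μ = 0 := by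
  obtain ⟨w, hw, hmul⟩ := h
  by_contra hμ
  have hT : (Finset.univ.filter (fun a : ι => w a ≠ 0)).Nonempty := by
    obtain ⟨a, ha⟩ := Function.ne_iff.mp hw
    exact ⟨a, Finset.mem_filter.mpr ⟨Finset.mem_univ _, ha⟩⟩
  obtain ⟨a, haT, hamin⟩ := Finset.exists_min_image _ ρ hT
  have haw : w a ≠ 0 := (Finset.mem_filter.mp haT).2
  have hzero : M.mulVec w a = 0 := by
    show ∑ c, M a c * w c = 0
    apply Finset.sum_eq_zero
    intro c _
    by_cases hwc : w c = 0
    · rw [hwc, mul_zero]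
    · have hcT : c ∈ Finset.univ.filter (fun a : ι => w a ≠ 0) :=
        Finset.mem_filter.mpr ⟨Finset.mem_univ _, hwc⟩
      have : ρ a ≤ ρ c := hamin c hcT
      rw [hM a c (by omega), zero_mul]
  have : μ * w a = 0 := by
    have := congrFun hmul a
    rw [hzero] at this
    simpa using this.symm
  rcases mul_eq_zero.mp this with h | h
  · exact hμ h
  · exact haw h

/-- At every `x ∈ D_B`, every complex eigenvalue of the Jacobian matrix `h'(x)` equals
zero; in particular, every complex eigenvalue of the entrywise absolute-value matrix
`|h'(x)|` equals zero, i.e. the spectral radius of `|h'(x)|` is zero. -/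
theorem hFun_jacobian_eigenvalues_zero
    {b N : ℕ} (hb : 1 ≤ b) (hN : 1 ≤ N) (S : Finset (Fin N × Fin N))
    (hS : ∀ j : Fin N, (j, j) ∈ S)
    (A : Fin N → Fin N → Matrix (Fin b) (Fin b) ℝ) :
    ∀ x ∈ DB b N S,
      (∀ μ : ℂ,
        (∃ w : ({p : Fin N × Fin N // p ∈ S} × Fin b × Fin b) → ℂ, w ≠ 0 ∧
          (Matrix.of (fun a c : {p : Fin N × Fin N // p ∈ S} × Fin b × Fin b =>
            ((fderiv ℝ (fun y : BlockVec b N S => hFun S A y a.1 a.2.1 a.2.2) x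
              (Pi.single c.1 (Pi.single c.2.1 (Pi.single c.2.2 (1 : ℝ)))) : ℝ)
                : ℂ))).mulVec w = μ • w) →
        μ = 0) ∧
      (∀ μ : ℂ,
        (∃ w : ({p : Fin N × Fin N // p ∈ S} × Fin b × Fin b) → ℂ, w ≠ 0 ∧
          (Matrix.of (fun a c : {p : Fin N × Fin N // p ∈ S} × Fin b × Fin b =>
            ((|fderiv ℝ (fun y : BlockVec b N S => hFun S A y a.1 a.2.1 a.2.2) x
              (Pi.single c.1 (Pi.single c.2.1 (Pi.single c.2.2 (1 : ℝ))))| : ℝ)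
                : ℂ))).mulVec w = μ • w) →
        μ = 0) := by
  intro x _
  set ι := {p : Fin N × Fin N // p ∈ S} × Fin b × Fin b
  set ρ : ι → ℕ := fun a => (a.1.1.1 : ℕ) * N + (a.1.1.2 : ℕ) with hρ
  have key : ∀ a c : ι, ¬ ρ c < ρ a →
      fderiv ℝ (fun y : BlockVec b N S => hFun S A y a.1 a.2.1 a.2.2) x
        (Pi.single c.1 (Pi.single c.2.1 (Pi.single c.2.2 (1 : ℝ)))) = 0 := by
    intro a c hlt
    apply fderiv_apply_eq_zero_of_line_const
    intro t
    show hFun S A (x + t • (Pi.single c.1 _ : BlockVec b N S)) a.1 a.2.1 a.2.2 = hFun S A x a.1 a.2.1 a.2.2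
    unfold hFun
    have := Hmap_perturb S A x c.1 (Pi.single c.2.1 (Pi.single c.2.2 (1 : ℝ))) t
      a.1.1.1 a.1.1.2 (by
        intro p q hpq hcpq
        apply hlt
        have hca : ρ a = (a.1.1.1 : ℕ) * N + (a.1.1.2 : ℕ) := rfl
        have hcc : ρ c = (c.1.1.1 : ℕ) * N + (c.1.1.2 : ℕ) := rfl
        rw [hcpq] at hcc
        simp only [] at hcc
        norm_num at hcc
        omega)
    rw [this]
  constructor
  · intro μ hμ
    apply eig_zero_of_strict_lower _ ρ _ μ hμ
    intro a c hlt
    show ((fderiv ℝ (fun y : BlockVec b N S => hFun S A y a.1 a.2.1 a.2.2) x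
      (Pi.single c.1 (Pi.single c.2.1 (Pi.single c.2.2 (1 : ℝ)))) : ℝ) : ℂ) = 0
    rw [key a c hlt]
    norm_num
  · intro μ hμ
    apply eig_zero_of_strict_lower _ ρ _ μ hμ
    intro a c hlt
    show ((|fderiv ℝ (fun y : BlockVec b N S => hFun S A y a.1 a.2.1 a.2.2) x
      (Pi.single c.1 (Pi.single c.2.1 (Pi.single c.2.2 (1 : ℝ))))| : ℝ) : ℂ) = 0
    rw [key a c hlt]
    norm_num
end

section
/- If x* ∈ D_B is a fixed point of h (i.e., h(x*) = x*), then x* is a point of attraction of the synchronous fixed-point iteration x^{p+1} = h(x^p): there exists an open neighborhood U ⊆ D_B of x* such that for every x⁰ ∈ U, the iterates x^p are defined for all p (remain in D_B) and converge to x* as p → ∞. -/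
open Filter Topology

section Aux

variable {b N : ℕ} (S : Finset (Fin N × Fin N))
  (A : Fin N → Fin N → Matrix (Fin b) (Fin b) ℝ)

lemma Xf_hFun (y : BlockVec b N S) (i j : Fin N) :
    Xf S (hFun S A y) i j = if (i, j) ∈ S then Hmap S A y i j else 0 := by
  unfold Xf hFun
  split <;> rfl

lemma continuous_Xf (i j : Fin N) : Continuous fun x : BlockVec b N S => Xf S x i j := by
  unfold Xf
  split
  · exact continuous_apply _
  · exact continuous_const

lemma isOpen_DB : IsOpen (DB b N S) := by
  have h : DB b N S =
      ⋂ j : Fin N, (fun x : BlockVec b N S => (Xf S x j j).det) ⁻¹' {(0 : ℝ)}ᶜ := by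
    ext x
    simp [DB, Set.mem_iInter, Matrix.isUnit_iff_isUnit_det, isUnit_iff_ne_zero]
  rw [h]
  exact isOpen_iInter_of_finite fun j =>
    isOpen_compl_singleton.preimage (continuous_Xf S j j).matrix_det

lemma continuousOn_inv_diag (j : Fin N) :
    ContinuousOn (fun x : BlockVec b N S => (Xf S x j j)⁻¹) (DB b N S) := by
  intro x hx
  apply ContinuousAt.continuousWithinAt
  have h1 : ContinuousAt (fun M : Matrix (Fin b) (Fin b) ℝ => M⁻¹) (Xf S x j j) := by
    apply continuousAt_matrix_inv
    have hd : IsUnit (Xf S x j j).det := (Matrix.isUnit_iff_isUnit_det _).1 (hx j)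
    rw [Ring.inverse_eq_inv']
    exact continuousAt_inv₀ (isUnit_iff_ne_zero.1 hd)
  have h2 : ContinuousAt (fun y : BlockVec b N S => Xf S y j j) x :=
    (continuous_Xf S j j).continuousAt
  exact ContinuousAt.comp (x := x) (g := fun M : Matrix (Fin b) (Fin b) ℝ => M⁻¹)
    (f := fun y : BlockVec b N S => Xf S y j j) h1 h2

lemma continuousOn_Hmap (i j : Fin N) :
    ContinuousOn (fun x : BlockVec b N S => Hmap S A x i j) (DB b N S) := by
  have hg : ∀ i' : Fin N, Continuous fun x : BlockVec b N S =>
      A i j - ∑ k ∈ Finset.univ.filter (fun k : Fin N => k < i'),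
        Xf S x i k * Xf S x k j :=
    fun i' => continuous_const.sub (continuous_finset_sum _ fun k _ =>
      (continuous_Xf S i k).matrix_mul (continuous_Xf S k j))
  unfold Hmap
  split_ifs with hij
  · exact (hg j).continuousOn.mul (continuousOn_inv_diag S j)
  · exact (hg i).continuousOn

lemma continuousOn_hFun : ContinuousOn (hFun S A) (DB b N S) := by
  rw [continuousOn_pi]; intro p
  rw [continuousOn_pi]; intro k
  rw [continuousOn_pi]; intro l
  have hc : Continuous fun M : Matrix (Fin b) (Fin b) ℝ => M k l :=
    (continuous_apply l).comp (continuous_apply k)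
  exact hc.comp_continuousOn (continuousOn_Hmap S A p.1.1 p.1.2)

lemma Hmap_congr (x y : BlockVec b N S) (i j : Fin N)
    (hd : j < i → Xf S x j j = Xf S y j j)
    (hk : ∀ k : Fin N, (k : ℕ) < min (i : ℕ) (j : ℕ) →
      Xf S x i k = Xf S y i k ∧ Xf S x k j = Xf S y k j) :
    Hmap S A x i j = Hmap S A y i j := by
  unfold Hmap
  split_ifs with hij
  · have hji : (j : ℕ) < (i : ℕ) := hij
    have hsum : ∑ k ∈ Finset.univ.filter (fun k : Fin N => k < j), Xf S x i k * Xf S x k j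
        = ∑ k ∈ Finset.univ.filter (fun k : Fin N => k < j), Xf S y i k * Xf S y k j := by
      refine Finset.sum_congr rfl fun k hkmem => ?_
      rw [Finset.mem_filter] at hkmem
      have hklt : (k : ℕ) < (j : ℕ) := hkmem.2
      obtain ⟨h1, h2⟩ := hk k (by omega)
      rw [h1, h2]
    rw [hsum, hd hij]
  · have hle : (i : ℕ) ≤ (j : ℕ) := not_lt.mp hij
    have hsum : ∑ k ∈ Finset.univ.filter (fun k : Fin N => k < i), Xf S x i k * Xf S x k j
        = ∑ k ∈ Finset.univ.filter (fun k : Fin N => k < i), Xf S y i k * Xf S y k j := by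
      refine Finset.sum_congr rfl fun k hkmem => ?_
      rw [Finset.mem_filter] at hkmem
      have hklt : (k : ℕ) < (i : ℕ) := hkmem.2
      obtain ⟨h1, h2⟩ := hk k (by omega)
      rw [h1, h2]
    rw [hsum]

variable (xstar : BlockVec b N S)

lemma Xf_xstar (hfix : hFun S A xstar = xstar) (i j : Fin N) :
    Xf S xstar i j = if (i, j) ∈ S then Hmap S A xstar i j else 0 := by
  conv_lhs => rw [← hfix]
  exact Xf_hFun S A xstar i j

lemma step_half (hfix : hFun S A xstar = xstar) (x : BlockVec b N S) (m : ℕ)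
    (hA : ∀ i j : Fin N, min (i : ℕ) (j : ℕ) < m → Xf S x i j = Xf S xstar i j) :
    ∀ i j : Fin N, (min (i : ℕ) (j : ℕ) < m ∨ ((i : ℕ) = m ∧ (i : ℕ) ≤ (j : ℕ))) →
      Xf S (hFun S A x) i j = Xf S xstar i j := by
  intro i j hcond
  rw [Xf_hFun S A, Xf_xstar S A xstar hfix]
  by_cases hm : (i, j) ∈ S
  · rw [if_pos hm, if_pos hm]
    apply Hmap_congr
    · intro hij
      have hji : (j : ℕ) < (i : ℕ) := hij
      exact hA j j (by omega)
    · intro k hkl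
      have hkm : (k : ℕ) < m := by omega
      exact ⟨hA i k (by omega), hA k j (by omega)⟩
  · rw [if_neg hm, if_neg hm]

lemma step_full (hfix : hFun S A xstar = xstar) (x : BlockVec b N S) (m : ℕ)
    (hA : ∀ i j : Fin N, (min (i : ℕ) (j : ℕ) < m ∨ ((i : ℕ) = m ∧ (i : ℕ) ≤ (j : ℕ))) →
      Xf S x i j = Xf S xstar i j) :
    ∀ i j : Fin N, min (i : ℕ) (j : ℕ) < m + 1 →
      Xf S (hFun S A x) i j = Xf S xstar i j := by
  intro i j hcond
  rw [Xf_hFun S A, Xf_xstar S A xstar hfix]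
  by_cases hm : (i, j) ∈ S
  · rw [if_pos hm, if_pos hm]
    apply Hmap_congr
    · intro hij
      have hji : (j : ℕ) < (i : ℕ) := hij
      exact hA j j (by omega)
    · intro k hkl
      have hkm : (k : ℕ) < m := by omega
      exact ⟨hA i k (by omega), hA k j (by omega)⟩
  · rw [if_neg hm, if_neg hm]

lemma agree_iter (hfix : hFun S A xstar = xstar) :
    ∀ (m : ℕ) (x : BlockVec b N S) (i j : Fin N), min (i : ℕ) (j : ℕ) < m →
      Xf S ((hFun S A)^[2 * m] x) i j = Xf S xstar i j := by
  intro m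
  induction m with
  | zero => intro x i j h; omega
  | succ m ih =>
    intro x i j hij
    have h1 := step_half S A xstar hfix ((hFun S A)^[2 * m] x) m (fun i j h => ih x i j h)
    have h2 := step_full S A xstar hfix (hFun S A ((hFun S A)^[2 * m] x)) m h1
    have hrw : 2 * (m + 1) = 2 * m + 1 + 1 := by ring
    rw [hrw, Function.iterate_succ_apply', Function.iterate_succ_apply']
    exact h2 i j hij

lemma iter_eq (hfix : hFun S A xstar = xstar) (x : BlockVec b N S) :
    (hFun S A)^[2 * N] x = xstar := by
  funext p
  obtain ⟨⟨i, j⟩, hm⟩ := p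
  have hlt : min (i : ℕ) (j : ℕ) < N := by
    have := i.isLt; have := j.isLt; omega
  have h := agree_iter S A xstar hfix N x i j hlt
  unfold Xf at h
  rw [dif_pos hm, dif_pos hm] at h
  exact h

noncomputable def Vaux : ℕ → Set (BlockVec b N S)
  | 0 => DB b N S
  | (k + 1) => DB b N S ∩ (hFun S A) ⁻¹' (Vaux k)

end Aux

/-- A fixed point `x* ∈ D_B` of `h` is a point of attraction of the synchronous
fixed-point iteration `x^{p+1} = h(x^p)`: there is an open neighborhood `U ⊆ D_B` of `x*`
such that all iterates starting in `U` stay in `D_B` and converge to `x*`. -/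
theorem fixedPoint_attracts_synchronous_iteration
    {b N : ℕ} (hb : 1 ≤ b) (hN : 1 ≤ N) (S : Finset (Fin N × Fin N))
    (hS : ∀ j : Fin N, (j, j) ∈ S)
    (A : Fin N → Fin N → Matrix (Fin b) (Fin b) ℝ)
    (xstar : BlockVec b N S) (hxstar : xstar ∈ DB b N S)
    (hfix : hFun S A xstar = xstar) :
    ∃ U : Set (BlockVec b N S), IsOpen U ∧ xstar ∈ U ∧ U ⊆ DB b N S ∧
      ∀ x0 ∈ U,
        (∀ p : ℕ, (hFun S A)^[p] x0 ∈ DB b N S) ∧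
        Tendsto (fun p : ℕ => (hFun S A)^[p] x0) atTop (𝓝 xstar) := by
  have hVopen : ∀ k, IsOpen (Vaux S A k) ∧ xstar ∈ Vaux S A k := by
    intro k
    induction k with
    | zero => exact ⟨isOpen_DB S, hxstar⟩
    | succ k ih =>
      refine ⟨(continuousOn_hFun S A).isOpen_inter_preimage (isOpen_DB S) ih.1, hxstar, ?_⟩
      show hFun S A xstar ∈ Vaux S A k
      rw [hfix]; exact ih.2
  have hVmem : ∀ k x, x ∈ Vaux S A k → ∀ p ≤ k, (hFun S A)^[p] x ∈ DB b N S := by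
    intro k
    induction k with
    | zero =>
      intro x hx p hp
      obtain rfl : p = 0 := Nat.le_zero.mp hp
      exact hx
    | succ k ih =>
      intro x hx p hp
      cases p with
      | zero => exact hx.1
      | succ q =>
        rw [Function.iterate_succ_apply]
        exact ih (hFun S A x) hx.2 q (Nat.le_of_succ_le_succ hp)
  refine ⟨Vaux S A (2 * N), (hVopen _).1, (hVopen _).2, ?_, ?_⟩
  · intro x hx
    have := hVmem _ x hx 0 (Nat.zero_le _)
    simpa using this
  · intro x0 hx0
    have heq : ∀ p, 2 * N ≤ p → (hFun S A)^[p] x0 = xstar := by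
      intro p hp
      have hsplit : p = (p - 2 * N) + 2 * N := by omega
      rw [hsplit, Function.iterate_add_apply, iter_eq S A xstar hfix x0,
        Function.iterate_fixed hfix]
    constructor
    · intro p
      by_cases hp : p ≤ 2 * N
      · exact hVmem _ x0 hx0 p hp
      · rw [heq p (by omega)]; exact hxstar
    · apply Tendsto.congr' _ tendsto_const_nhds
      filter_upwards [eventually_ge_atTop (2 * N)] with p hp
      exact (heq p hp).symm
end

section
/- The map h has at most one fixed point: if x*, y* ∈ D_B satisfy h(x*) = x* and h(y*) = y*, then x* = y*. -/
open Filter Topology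

/-- The block-ILU map `h` has at most one fixed point in `D_B`. -/
theorem hFun_fixedPoint_unique
    {b N : ℕ} (hb : 1 ≤ b) (hN : 1 ≤ N) (S : Finset (Fin N × Fin N))
    (hS : ∀ j : Fin N, (j, j) ∈ S)
    (A : Fin N → Fin N → Matrix (Fin b) (Fin b) ℝ)
    (xstar ystar : BlockVec b N S)
    (hx : xstar ∈ DB b N S) (hy : ystar ∈ DB b N S)
    (hfx : hFun S A xstar = xstar) (hfy : hFun S A ystar = ystar) :
    xstar = ystar := by
  have key : ∀ n : ℕ, ∀ i j : Fin N,
      2 * min i.val j.val + (if j < i then 1 else 0) < n →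
      Xf S xstar i j = Xf S ystar i j := by
    intro n
    induction n with
    | zero => intro i j h; omega
    | succ n ih =>
      intro i j hlt
      by_cases hmem : (i, j) ∈ S
      · have ex : Xf S xstar i j = Hmap S A xstar i j := by
          ext k l
          simp only [Xf, dif_pos hmem]
          exact (congrFun (congrFun (congrFun hfx ⟨(i, j), hmem⟩) k) l).symm
        have ey : Xf S ystar i j = Hmap S A ystar i j := by
          ext k l
          simp only [Xf, dif_pos hmem]
          exact (congrFun (congrFun (congrFun hfy ⟨(i, j), hmem⟩) k) l).symm
        rw [ex, ey]
        unfold Hmap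
        by_cases hji : j < i
        · have hji' : j.val < i.val := hji
          rw [if_pos hji] at hlt
          rw [if_pos hji, if_pos hji]
          have hdiag : Xf S xstar j j = Xf S ystar j j := by
            apply ih
            rw [if_neg (lt_irrefl j)]
            omega
          have hsum : ∑ k ∈ Finset.univ.filter (fun k : Fin N => k < j),
              Xf S xstar i k * Xf S xstar k j
              = ∑ k ∈ Finset.univ.filter (fun k : Fin N => k < j),
              Xf S ystar i k * Xf S ystar k j := by
            refine Finset.sum_congr rfl fun k hk => ?_
            have hkj : k < j := (Finset.mem_filter.mp hk).2
            have hkj' : k.val < j.val := hkj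
            have h1 : Xf S xstar i k = Xf S ystar i k := by
              apply ih
              rw [if_pos (hkj.trans hji)]
              omega
            have h2 : Xf S xstar k j = Xf S ystar k j := by
              apply ih
              rw [if_neg (not_lt.mpr hkj.le)]
              omega
            rw [h1, h2]
          rw [hdiag, hsum]
        · have hij' : ¬ j.val < i.val := hji
          rw [if_neg hji] at hlt
          rw [if_neg hji, if_neg hji]
          have hsum : ∑ k ∈ Finset.univ.filter (fun k : Fin N => k < i),
              Xf S xstar i k * Xf S xstar k j
              = ∑ k ∈ Finset.univ.filter (fun k : Fin N => k < i),
              Xf S ystar i k * Xf S ystar k j := by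
            refine Finset.sum_congr rfl fun k hk => ?_
            have hki : k < i := (Finset.mem_filter.mp hk).2
            have hki' : k.val < i.val := hki
            have h1 : Xf S xstar i k = Xf S ystar i k := by
              apply ih
              rw [if_pos hki]
              omega
            have h2 : Xf S xstar k j = Xf S ystar k j := by
              apply ih
              rw [if_neg (not_lt.mpr (le_of_lt (lt_of_lt_of_le hki (not_lt.mp hji))))]
              omega
            rw [h1, h2]
          rw [hsum]
      · simp [Xf, hmem]
  funext p k l
  obtain ⟨⟨i, j⟩, hp⟩ := p
  have h := key (2 * min i.val j.val + (if j < i then 1 else 0) + 1) i j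
    (Nat.lt_succ_self _)
  simp only [Xf, dif_pos hp] at h
  exact congrFun (congrFun (Matrix.of.injective h) k) l
end

section
/- The map g has a unique fixed point x* ∈ ℝ^m, and for every initial vector x⁰ ∈ ℝ^m, the chunked sweep iteration reaches it in at most p sweeps: T^p(x⁰) = x*, where p is the number of chunks. -/
open Filter Topology

/-- Let `g` have strictly lower triangular structure (each component `g_k` depends only
on the components with index `< k`), let `ch` assign to each index its chunk, with
chunks forming consecutive intervals (`ch` monotone and surjective onto `Fin p`), and
let `T` be the sweep operator: within each chunk entries are updated sequentially using
already-updated values from that chunk, while values from other chunks come from the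
previous sweep. Then `g` has a unique fixed point `x*`, and `T^[p] x⁰ = x*` for every
initial vector `x⁰`: the chunked sweep iteration converges in at most `p` sweeps. -/
theorem chunked_sweep_converges_in_p_sweeps
    {m p : ℕ} (hm : 1 ≤ m)
    (g : (Fin m → ℝ) → Fin m → ℝ)
    (hg : ∀ k : Fin m, ∀ x y : Fin m → ℝ, (∀ l : Fin m, l < k → x l = y l) →
      g x k = g y k)
    (ch : Fin m → Fin p) (hmono : Monotone ch) (hsurj : Function.Surjective ch)
    (T : (Fin m → ℝ) → Fin m → ℝ)
    (hT : ∀ (x : Fin m → ℝ) (k : Fin m),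
      T x k = g (fun l => if l < k ∧ ch l = ch k then T x l else x l) k) :
    ∃ xs : Fin m → ℝ, g xs = xs ∧ (∀ ys : Fin m → ℝ, g ys = ys → ys = xs) ∧
      ∀ x0 : Fin m → ℝ, T^[p] x0 = xs := by
  classical
  set xs := g^[m] (fun _ => 0) with hxs
  have L : ∀ n : ℕ, ∀ x y : Fin m → ℝ, ∀ k : Fin m, (k : ℕ) < n →
      g^[n] x k = g^[n] y k := by
    intro n
    induction n with
    | zero => intro x y k hk; omega
    | succ n ih =>
      intro x y k hk
      rw [Function.iterate_succ_apply', Function.iterate_succ_apply']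
      refine hg k _ _ (fun l hl => ih x y l ?_)
      have := Fin.lt_iff_val_lt_val.mp hl
      omega
  have hfix : g xs = xs := by
    funext k
    have h1 : g xs k = g^[m+1] (fun _ => 0) k := by
      rw [Function.iterate_succ_apply']
    rw [h1, Function.iterate_succ_apply]
    exact L m _ _ k k.isLt
  have huniq : ∀ ys : Fin m → ℝ, g ys = ys → ys = xs := by
    intro ys hy
    funext k
    calc ys k = g^[m] ys k := by rw [Function.iterate_fixed hy m]
      _ = xs k := L m ys _ k k.isLt
  have B : ∀ (q : ℕ) (x : Fin m → ℝ), (∀ l : Fin m, (ch l : ℕ) < q → x l = xs l) →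
      ∀ k : Fin m, (ch k : ℕ) ≤ q → T x k = xs k := by
    intro q x hx
    have main : ∀ n : ℕ, ∀ k : Fin m, (k : ℕ) = n → (ch k : ℕ) ≤ q → T x k = xs k := by
      intro n
      induction n using Nat.strong_induction_on with
      | _ n ih =>
        intro k hkn hk
        rw [hT]
        have hz : ∀ l : Fin m, l < k →
            (if l < k ∧ ch l = ch k then T x l else x l) = xs l := by
          intro l hl
          by_cases hc : ch l = ch k
          · rw [if_pos ⟨hl, hc⟩]
            have hln : (l : ℕ) < n := by
              have := Fin.lt_iff_val_lt_val.mp hl; omega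
            exact ih l.val hln l rfl (by rw [hc]; exact hk)
          · rw [if_neg (by tauto)]
            apply hx
            have h2 : ch l < ch k := lt_of_le_of_ne (hmono hl.le) hc
            have := Fin.lt_iff_val_lt_val.mp h2
            omega
        calc g (fun l => if l < k ∧ ch l = ch k then T x l else x l) k
            = g xs k := hg k _ _ hz
          _ = xs k := by rw [hfix]
    intro k hk
    exact main k.val k rfl hk
  have S : ∀ (q : ℕ) (x0 : Fin m → ℝ), ∀ l : Fin m, (ch l : ℕ) < q →
      T^[q] x0 l = xs l := by
    intro q
    induction q with
    | zero => intro x0 l hl; omega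
    | succ q ih =>
      intro x0 l hl
      rw [Function.iterate_succ_apply']
      exact B q (T^[q] x0) (fun l' hl' => ih x0 l' hl') l (by omega)
  exact ⟨xs, hfix, huniq, fun x0 => funext fun l => S p x0 l (ch l).isLt⟩
end
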